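/- arXiv:1704.07501 — 13 statements merged into one kernel-verified Lean document; each statement's English description precedes it below -/
import Mathlib

section
/- For every 1 ≤ j ≤ n, the j×j tridiagonal matrix A_j whose diagonal entries are −a_{11},…,−a_{jj}, whose superdiagonal entries are −a_{12},…,−a_{j−1,j}, and whose subdiagonal entries are a_{21},…,a_{j,j−1} is invertible, and moreover (−1)^j det(A_j) > 0. Consequently the linear system (S_j) has a unique solution (x_1^{(j)},…,x_j^{(j)}). -/
open Matrix


/-- The `j × j` tridiagonal matrix `A_j` of the system `(S_j)`:
diagonal entries `−a_{11}, …, −a_{jj}`, superdiagonal entries `−a_{12}, …, −a_{j−1,j}`,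
subdiagonal entries `a_{21}, …, a_{j,j−1}`.  (Math indices `1, …, j` correspond to
`Fin j` indices `0, …, j−1`.) -/
def Atri (a : ℕ → ℕ → ℝ) (j : ℕ) : Matrix (Fin j) (Fin j) ℝ :=
  Matrix.of fun i k =>
    if (i : ℕ) = (k : ℕ) then -a ((i : ℕ) + 1) ((i : ℕ) + 1)
    else if (k : ℕ) = (i : ℕ) + 1 then -a ((i : ℕ) + 1) ((i : ℕ) + 2)
    else if (i : ℕ) = (k : ℕ) + 1 then a ((i : ℕ) + 1) ((k : ℕ) + 1)
    else 0

/-- `x` solves the linear system `(S_j)`: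
`−a_{11}x_1 − a_{12}x_2 = −ã_{10}`;
`a_{i,i−1}x_{i−1} − a_{ii}x_i − a_{i,i+1}x_{i+1} = ã_{i0}` for `2 ≤ i ≤ j−1`;
`a_{j,j−1}x_{j−1} − a_{jj}x_j = ã_{j0}`
(for `j = 1` the single equation reads `−a_{11}x_1 = −ã_{10}`). -/
def IsSolS (a : ℕ → ℕ → ℝ) (ta : ℕ → ℝ) (j : ℕ) (x : ℕ → ℝ) : Prop :=
  ∀ i, 1 ≤ i → i ≤ j →
    (if 2 ≤ i then a i (i - 1) * x (i - 1) else 0)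
      - a i i * x i
      - (if i < j then a i (i + 1) * x (i + 1) else 0)
    = if i = 1 then -ta 1 else ta i

lemma Atri_submatrix {j j' : ℕ} (a : ℕ → ℕ → ℝ) (f g : Fin j → Fin j')
    (hf : ∀ i, ((f i : ℕ)) = (i : ℕ)) (hg : ∀ i, ((g i : ℕ)) = (i : ℕ)) :
    (Atri a j').submatrix f g = Atri a j := by
  ext i k
  simp only [Matrix.submatrix_apply, Atri, Matrix.of_apply, hf, hg]

lemma det_Atri_one (a : ℕ → ℕ → ℝ) : (Atri a 1).det = -a 1 1 := by
  rw [Matrix.det_fin_one]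
  simp [Atri]

lemma det_Atri_rec (a : ℕ → ℕ → ℝ) (j : ℕ) :
    (Atri a (j+2)).det =
      -a (j+2) (j+2) * (Atri a (j+1)).det
        + a (j+2) (j+1) * a (j+1) (j+2) * (Atri a j).det := by
  set A := Atri a (j+2) with hA
  set L : Fin (j+2) := Fin.last (j+1) with hL
  set c0 : Fin (j+2) := ⟨j, by omega⟩ with hc0
  have hLc : (L : ℕ) = j + 1 := rfl
  -- entries of the last row
  have hrow : ∀ c : Fin (j+2), c ≠ L → c ≠ c0 → A L c = 0 := by
    intro c h1 h2
    have h1' : (c : ℕ) ≠ j + 1 := fun h => h1 (Fin.ext h)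
    have h2' : (c : ℕ) ≠ j := fun h => h2 (Fin.ext h)
    simp only [hA, Atri, Matrix.of_apply, hLc]
    rw [if_neg (by omega), if_neg (by omega), if_neg (by omega)]
  set g : Fin (j+2) → ℝ := fun c =>
    (-1) ^ ((L : ℕ) + (c : ℕ)) * A L c * (A.submatrix L.succAbove c.succAbove).det with hg
  have hexp : A.det = ∑ c : Fin (j+2), g c := Matrix.det_succ_row A L
  have hne : c0 ≠ L := by
    intro h
    have := congrArg (Fin.val) h
    simp [hc0, hLc] at this
  have hsum : ∑ c : Fin (j+2), g c = g L + g c0 := by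
    rw [← Finset.add_sum_erase _ g (Finset.mem_univ L),
        ← Finset.add_sum_erase _ g (Finset.mem_erase.2 ⟨hne, Finset.mem_univ c0⟩)]
    have : ∑ c ∈ (Finset.univ.erase L).erase c0, g c = 0 := by
      apply Finset.sum_eq_zero
      intro c hc
      have h2 := (Finset.mem_erase.1 hc).1
      have h1 := (Finset.mem_erase.1 (Finset.mem_erase.1 hc).2).1
      simp [hg, hrow c h1 h2]
    rw [this]; ring
  -- the (L, L) minor
  have hminorL : A.submatrix L.succAbove L.succAbove = Atri a (j+1) := by
    apply Atri_submatrix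
    · intro i; simp [hL, Fin.succAbove_last]
    · intro i; simp [hL, Fin.succAbove_last]
  have hALL : A L L = -a (j+2) (j+2) := by
    simp [hA, Atri, hLc]
  have hgL : g L = -a (j+2) (j+2) * (Atri a (j+1)).det := by
    rw [hg]
    simp only [hminorL, hALL, hLc]
    have : (-1 : ℝ) ^ (j + 1 + (j + 1)) = 1 := by
      rw [show j + 1 + (j+1) = 2*(j+1) by ring, pow_mul]; norm_num
    rw [this, one_mul]
  -- the (L, c0) minor
  have hALc0 : A L c0 = a (j+2) (j+1) := by
    simp only [hA, Atri, Matrix.of_apply, hLc, hc0]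
    rw [if_neg (by omega), if_neg (by omega)]
    norm_num
  set B := A.submatrix L.succAbove c0.succAbove with hB
  have hsa : ∀ p : Fin (j+1), (p : ℕ) < j → ((c0.succAbove p : ℕ)) = (p : ℕ) := by
    intro p hp
    rw [Fin.succAbove_of_castSucc_lt]
    · simp
    · rw [Fin.lt_def]; simpa using hp
  have hsalast : ((c0.succAbove (Fin.last j) : ℕ)) = j + 1 := by
    rw [Fin.succAbove_of_le_castSucc]
    · simp
    · rw [Fin.le_def]; simp [hc0]
  have hcolF : c0.succAbove (Fin.last j) = Fin.last (j+1) := Fin.ext (by rw [hsalast]; simp)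
  have hBcol : ∀ i : Fin (j+1), i ≠ Fin.last j → B i (Fin.last j) = 0 := by
    intro i hi
    have hi' : (i : ℕ) ≠ j := fun h => hi (Fin.ext h)
    have hi2 : (i : ℕ) < j := by have := i.isLt; omega
    simp only [hB, hL, Matrix.submatrix_apply, hA, Atri, Matrix.of_apply, Fin.succAbove_last,
      Fin.coe_castSucc, hcolF, Fin.val_last]
    rw [if_neg (by omega), if_neg (by omega), if_neg (by omega)]
  have hBlast : B (Fin.last j) (Fin.last j) = -a (j+1) (j+2) := by
    simp only [hB, hL, Matrix.submatrix_apply, hcolF, hA, Atri, Matrix.of_apply,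
      Fin.succAbove_last, Fin.coe_castSucc, Fin.val_last]
    rw [if_neg (by omega)]
    norm_num
  have hminorB : B.submatrix (Fin.last j).succAbove (Fin.last j).succAbove = Atri a j := by
    rw [hB, Matrix.submatrix_submatrix]
    apply Atri_submatrix
    · intro i; simp [hL, Fin.succAbove_last]
    · intro i
      simp only [Function.comp_apply, Fin.succAbove_last]
      rw [hsa]
      · simp
      · simp
  have hdetB : B.det = -a (j+1) (j+2) * (Atri a j).det := by
    rw [Matrix.det_succ_column B (Fin.last j)]
    rw [Finset.sum_eq_single_of_mem (Fin.last j) (Finset.mem_univ _)]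
    · rw [hBlast, hminorB]
      have : (-1 : ℝ) ^ ((Fin.last j : ℕ) + (Fin.last j : ℕ)) = 1 := by
        rw [Fin.val_last, show j + j = 2*j by ring, pow_mul]; norm_num
      rw [this, one_mul]
    · intro b _ hb
      rw [hBcol b hb]; ring
  have hgc0 : g c0 = -(a (j+2) (j+1) * (-a (j+1) (j+2) * (Atri a j).det)) := by
    rw [hg]
    simp only [← hB, hdetB, hALc0, hLc]
    have : (-1 : ℝ) ^ (j + 1 + (c0 : ℕ)) = -1 := by
      simp only [hc0]
      rw [show j + 1 + j = 2*j + 1 by ring, pow_succ, pow_mul]; norm_num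
    rw [this]; ring
  rw [hexp, hsum, hgL, hgc0]; ring

lemma q_pos (n : ℕ) (hn : 1 ≤ n) (a : ℕ → ℕ → ℝ)
    (ha_diag : ∀ i, 1 ≤ i → i ≤ n → 0 < a i i)
    (ha_sub : ∀ i, 2 ≤ i → i ≤ n → 0 < a i (i - 1))
    (ha_sup : ∀ i, 1 ≤ i → i ≤ n - 1 → 0 < a i (i + 1)) :
    ∀ j, j ≤ n → 0 < (-1 : ℝ) ^ j * (Atri a j).det := by
  intro j
  induction j using Nat.strong_induction_on with
  | _ j ih =>
    match j with
    | 0 => intro _; simp [Matrix.det_fin_zero]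
    | 1 =>
      intro h1
      rw [det_Atri_one]
      simpa using ha_diag 1 le_rfl hn
    | (m+2) =>
      intro hm
      rw [det_Atri_rec]
      have IH1 := ih (m+1) (by omega) (by omega)
      have IH0 := ih m (by omega) (by omega)
      have h1 : 0 < a (m+2) (m+2) := ha_diag _ (by omega) hm
      have h2 : 0 < a (m+2) (m+1) := by
        have := ha_sub (m+2) (by omega) hm
        simpa using this
      have h3 : 0 < a (m+1) (m+2) := ha_sup (m+1) (by omega) (by omega)
      have e : (-1 : ℝ) ^ (m+2) *
          (-a (m+2) (m+2) * (Atri a (m+1)).det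
            + a (m+2) (m+1) * a (m+1) (m+2) * (Atri a m).det)
          = a (m+2) (m+2) * ((-1 : ℝ) ^ (m+1) * (Atri a (m+1)).det)
            + (a (m+2) (m+1) * a (m+1) (m+2)) * ((-1 : ℝ) ^ m * (Atri a m).det) := by
        rw [pow_succ, pow_succ]; ring
      rw [e]
      exact add_pos (mul_pos h1 IH1) (mul_pos (mul_pos h2 h3) IH0)

lemma mulVec_Atri (a : ℕ → ℕ → ℝ) (j : ℕ) (x : ℕ → ℝ) (i : Fin j) :
    (Atri a j *ᵥ fun k : Fin j => x ((k : ℕ) + 1)) i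
      = (if 1 ≤ (i : ℕ) then a ((i : ℕ) + 1) (i : ℕ) * x (i : ℕ) else 0)
        + (- a ((i : ℕ) + 1) ((i : ℕ) + 1) * x ((i : ℕ) + 1))
        + (if (i : ℕ) + 1 < j then -a ((i : ℕ) + 1) ((i : ℕ) + 2) * x ((i : ℕ) + 2) else 0) := by
  set m := (i : ℕ) with hm
  have hml : m < j := i.isLt
  have : (Atri a j *ᵥ fun k : Fin j => x ((k : ℕ) + 1)) i
      = ∑ k ∈ Finset.range j,
        (if m = k then -a (m+1) (m+1) else if k = m+1 then -a (m+1) (m+2)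
          else if m = k+1 then a (m+1) (k+1) else 0) * x (k+1) := by
    rw [Matrix.mulVec, dotProduct]
    exact Fin.sum_univ_eq_sum_range
      (fun k => (if m = k then -a (m+1) (m+1) else if k = m+1 then -a (m+1) (m+2)
          else if m = k+1 then a (m+1) (k+1) else 0) * x (k+1)) j
  rw [this]
  have hsplit : ∀ k, (if m = k then -a (m+1) (m+1) else if k = m+1 then -a (m+1) (m+2)
          else if m = k+1 then a (m+1) (k+1) else 0) * x (k+1)
      = (if m = k then -a (m+1) (m+1) * x (k+1) else 0)
        + (if k = m+1 then -a (m+1) (m+2) * x (k+1) else 0)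
        + (if m = k+1 then a (m+1) (k+1) * x (k+1) else 0) := by
    intro k
    split_ifs <;> first | ring1 | (exfalso; omega)
  simp only [hsplit]
  rw [Finset.sum_add_distrib, Finset.sum_add_distrib]
  have H1 : ∑ k ∈ Finset.range j, (if m = k then -a (m+1) (m+1) * x (k+1) else 0)
      = -a (m+1) (m+1) * x (m+1) := by
    rw [Finset.sum_ite_eq, if_pos (Finset.mem_range.2 hml)]
  have H2 : ∑ k ∈ Finset.range j, (if k = m+1 then -a (m+1) (m+2) * x (k+1) else 0)
      = if m + 1 < j then -a (m+1) (m+2) * x (m+2) else 0 := by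
    rw [Finset.sum_ite_eq']
    by_cases h : m + 1 < j
    · rw [if_pos (Finset.mem_range.2 h), if_pos h]
      try ring_nf
    · rw [if_neg (by simpa using h), if_neg h]
  have H3 : ∑ k ∈ Finset.range j, (if m = k+1 then a (m+1) (k+1) * x (k+1) else 0)
      = if 1 ≤ m then a (m+1) m * x m else 0 := by
    by_cases hi : 1 ≤ m
    · have hcongr : ∀ k ∈ Finset.range j,
          (if m = k+1 then a (m+1) (k+1) * x (k+1) else 0)
            = (if k = m-1 then a (m+1) m * x m else 0) := by
        intro k _
        by_cases h : m = k + 1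
        · rw [if_pos h, if_pos (by omega), ← h]
        · rw [if_neg h, if_neg (by omega)]
      rw [Finset.sum_congr rfl hcongr, Finset.sum_ite_eq',
        if_pos (Finset.mem_range.2 (by omega)), if_pos hi]
    · have hcongr : ∀ k ∈ Finset.range j,
          (if m = k+1 then a (m+1) (k+1) * x (k+1) else 0) = 0 := by
        intro k _
        rw [if_neg (by omega)]
      rw [Finset.sum_congr rfl hcongr, Finset.sum_const_zero, if_neg hi]
  rw [H1, H2, H3]
  ring

lemma isSolS_iff (a : ℕ → ℕ → ℝ) (ta : ℕ → ℝ) (j : ℕ) (x : ℕ → ℝ) :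
    IsSolS a ta j x ↔
      (Atri a j *ᵥ fun k : Fin j => x ((k : ℕ) + 1))
        = fun i : Fin j => if (i : ℕ) = 0 then -ta 1 else ta ((i : ℕ) + 1) := by
  have hL : ∀ i : Fin j, (Atri a j *ᵥ fun k : Fin j => x ((k : ℕ) + 1)) i
      = (if 2 ≤ (i : ℕ) + 1 then a ((i : ℕ) + 1) ((i : ℕ) + 1 - 1) * x ((i : ℕ) + 1 - 1) else 0)
        - a ((i : ℕ) + 1) ((i : ℕ) + 1) * x ((i : ℕ) + 1)
        - (if (i : ℕ) + 1 < j then a ((i : ℕ) + 1) ((i : ℕ) + 1 + 1) * x ((i : ℕ) + 1 + 1)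
            else 0) := by
    intro i
    rw [mulVec_Atri]
    simp only [Nat.add_sub_cancel, show (i : ℕ) + 1 + 1 = (i : ℕ) + 2 by omega,
      show (2 ≤ (i : ℕ) + 1) = (1 ≤ (i : ℕ)) by simp]
    by_cases h1 : 1 ≤ (i : ℕ) <;> by_cases h2 : (i : ℕ) + 1 < j <;>
      simp [h1, h2] <;> ring
  constructor
  · intro h
    funext i
    rw [hL i, h ((i : ℕ) + 1) (by omega) (by have := i.isLt; omega)]
    by_cases h0 : (i : ℕ) = 0
    · rw [if_pos (by omega), if_pos h0]
    · rw [if_neg (by omega), if_neg h0]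
  · intro h i' h1 h2
    obtain ⟨m, rfl⟩ : ∃ m, i' = m + 1 := ⟨i' - 1, by omega⟩
    have hev := congrFun h ⟨m, by omega⟩
    rw [hL ⟨m, by omega⟩] at hev
    simp only [] at hev ⊢
    rw [hev]
    by_cases h0 : m = 0
    · rw [if_pos (by simpa using h0), if_pos (by omega)]
    · rw [if_neg (by simpa using h0), if_neg (by omega)]

/-- For every `1 ≤ j ≤ n`, the tridiagonal matrix `A_j` is invertible with
`(−1)^j det(A_j) > 0`; consequently the system `(S_j)` has a unique solution. -/
theorem stmt0 (n : ℕ) (hn : 1 ≤ n) (a : ℕ → ℕ → ℝ) (ta : ℕ → ℝ)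
    (ha_diag : ∀ i, 1 ≤ i → i ≤ n → 0 < a i i)
    (ha_sub : ∀ i, 2 ≤ i → i ≤ n → 0 < a i (i - 1))
    (ha_sup : ∀ i, 1 ≤ i → i ≤ n - 1 → 0 < a i (i + 1))
    (hta : ∀ i, 2 ≤ i → i ≤ n → 0 < ta i) :
    ∀ j, 1 ≤ j → j ≤ n →
      IsUnit (Atri a j) ∧
      0 < (-1 : ℝ) ^ j * (Atri a j).det ∧
      ∃ x : ℕ → ℝ, IsSolS a ta j x ∧
        ∀ y : ℕ → ℝ, IsSolS a ta j y → ∀ i, 1 ≤ i → i ≤ j → y i = x i := by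
  intro j hj1 hjn
  have hq := q_pos n hn a ha_diag ha_sub ha_sup j hjn
  have hdet : IsUnit (Atri a j).det := by
    refine isUnit_iff_ne_zero.mpr fun h => ?_
    rw [h, mul_zero] at hq
    exact lt_irrefl 0 hq
  have hunit : IsUnit (Atri a j) := (Matrix.isUnit_iff_isUnit_det _).mpr hdet
  refine ⟨hunit, hq, ?_⟩
  set b : Fin j → ℝ := fun i => if (i : ℕ) = 0 then -ta 1 else ta ((i : ℕ) + 1) with hb
  set v : Fin j → ℝ := (Atri a j)⁻¹ *ᵥ b with hv
  set x : ℕ → ℝ := fun k => if h : 1 ≤ k ∧ k ≤ j then v ⟨k - 1, by omega⟩ else 0 with hx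
  have hwx : (fun k : Fin j => x ((k : ℕ) + 1)) = v := by
    funext k
    have hk : 1 ≤ (k : ℕ) + 1 ∧ (k : ℕ) + 1 ≤ j := ⟨by omega, by have := k.isLt; omega⟩
    simp only [hx]
    rw [dif_pos hk]
    exact congrArg v (Fin.ext (by simp))
  have hsol : IsSolS a ta j x := by
    rw [isSolS_iff, hwx, hv, Matrix.mulVec_mulVec, Matrix.mul_nonsing_inv _ hdet,
      Matrix.one_mulVec]
  refine ⟨x, hsol, ?_⟩
  intro y hy i h1 h2
  rw [isSolS_iff] at hy
  have hyv : (fun k : Fin j => y ((k : ℕ) + 1)) = v := by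
    have h' := congrArg (fun u => (Atri a j)⁻¹ *ᵥ u) hy
    simpa [Matrix.mulVec_mulVec, Matrix.nonsing_inv_mul _ hdet, Matrix.one_mulVec, hv]
      using h'
  have hev := congrFun hyv ⟨i - 1, by omega⟩
  have hco : ((⟨i - 1, by omega⟩ : Fin j) : ℕ) + 1 = i := by simp; omega
  rw [hco] at hev
  rw [hev]
  simp only [hx]
  rw [dif_pos ⟨h1, h2⟩]
end

section
/- (Proposition: invasion rates and positive solutions.) For every 1 ≤ j ≤ n−1, the unique solution of the system (S_{j+1}) satisfies x_{j+1}^{(j+1)} = I_{j+1} / (a_{j+1,j+1} + a_{j+1,j} c_j'), where the denominator a_{j+1,j+1} + a_{j+1,j} c_j' is strictly positive. In particular, x_{j+1}^{(j+1)} > 0 if and only if I_{j+1} > 0, x_{j+1}^{(j+1)} = 0 if and only if I_{j+1} = 0, and x_{j+1}^{(j+1)} < 0 if and only if I_{j+1} < 0. -/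
/-- Forward sweep of the right-hand side. -/
noncomputable def eSeq (a : ℕ → ℕ → ℝ) (ta : ℕ → ℝ) (cp : ℕ → ℝ) : ℕ → ℝ
  | 0 => 0
  | 1 => ta 1 / a 1 1
  | (i+2) => (a (i+2) (i+1) * eSeq a ta cp (i+1) - ta (i+2)) /
      (a (i+2) (i+2) + a (i+2) (i+1) * cp (i+1))

lemma eSeq_succ (a : ℕ → ℕ → ℝ) (ta : ℕ → ℝ) (cp : ℕ → ℝ) (i : ℕ) :
    eSeq a ta cp (i+2) = (a (i+2) (i+1) * eSeq a ta cp (i+1) - ta (i+2)) /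
      (a (i+2) (i+2) + a (i+2) (i+1) * cp (i+1)) := rfl

/-- (Invasion rates and positive solutions.)  For `1 ≤ j ≤ n−1`, with the
forward-sweep coefficients `c_1' = a_{12}/a_{11}`,
`c_i' = a_{i,i+1}/(a_{ii} + a_{i,i−1} c_{i−1}')`, the unique solution of the system
`(S_{j+1})` satisfies `x_{j+1}^{(j+1)} = I_{j+1}/(a_{j+1,j+1} + a_{j+1,j} c_j')`,
where the denominator is strictly positive and
`I_{j+1} = −ã_{j+1,0} + a_{j+1,j} x_j^{(j)}`.
In particular `x_{j+1}^{(j+1)} > 0 ↔ I_{j+1} > 0`, `x_{j+1}^{(j+1)} = 0 ↔ I_{j+1} = 0`,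
and `x_{j+1}^{(j+1)} < 0 ↔ I_{j+1} < 0`. -/
theorem stmt3 (n : ℕ) (hn : 2 ≤ n) (a : ℕ → ℕ → ℝ) (ta : ℕ → ℝ)
    (ha_diag : ∀ i, 1 ≤ i → i ≤ n → 0 < a i i)
    (ha_sub : ∀ i, 2 ≤ i → i ≤ n → 0 < a i (i - 1))
    (ha_sup : ∀ i, 1 ≤ i → i ≤ n - 1 → 0 < a i (i + 1))
    (hta : ∀ i, 2 ≤ i → i ≤ n → 0 < ta i)
    (cp : ℕ → ℝ)
    (hcp1 : cp 1 = a 1 2 / a 1 1)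
    (hcp : ∀ i, 2 ≤ i → i ≤ n - 1 →
      cp i = a i (i + 1) / (a i i + a i (i - 1) * cp (i - 1)))
    (j : ℕ) (hj1 : 1 ≤ j) (hjn : j ≤ n - 1)
    (xj xj1 : ℕ → ℝ)
    (hxj : IsSolS a ta j xj) (hxj1 : IsSolS a ta (j + 1) xj1)
    (I : ℝ) (hI : I = -ta (j + 1) + a (j + 1) j * xj j) :
    0 < a (j + 1) (j + 1) + a (j + 1) j * cp j ∧
    xj1 (j + 1) = I / (a (j + 1) (j + 1) + a (j + 1) j * cp j) ∧
    (0 < xj1 (j + 1) ↔ 0 < I) ∧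
    (xj1 (j + 1) = 0 ↔ I = 0) ∧
    (xj1 (j + 1) < 0 ↔ I < 0) := by
  -- positivity of the forward-sweep coefficients
  have hcp_pos : ∀ i, 1 ≤ i → i ≤ n - 1 → 0 < cp i := by
    intro i hi
    induction i, hi using Nat.le_induction with
    | base =>
      intro h
      rw [hcp1]
      exact div_pos (ha_sup 1 le_rfl h) (ha_diag 1 le_rfl (by omega))
    | succ i hi ih =>
      intro h
      rw [hcp (i+1) (by omega) h]
      simp only [Nat.add_sub_cancel]
      have h1 := ha_diag (i+1) (by omega) (by omega)
      have h2 := ha_sub (i+1) (by omega) (by omega)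
      simp only [Nat.add_sub_cancel] at h2
      have h3 := ih (by omega)
      exact div_pos (ha_sup (i+1) (by omega) h) (by positivity)
  -- positivity of the denominators
  have hd_pos : ∀ m, 2 ≤ m → m ≤ n → 0 < a m m + a m (m-1) * cp (m-1) := by
    intro m h2 hmn
    have h1 := ha_diag m (by omega) hmn
    have h3 := ha_sub m h2 hmn
    have h4 := hcp_pos (m-1) (by omega) (by omega)
    positivity
  -- forward elimination relation
  have hrec : ∀ (m : ℕ), m ≤ n → ∀ (x : ℕ → ℝ), IsSolS a ta m x →
      ∀ i, 1 ≤ i → i < m → x i = eSeq a ta cp i - cp i * x (i+1) := by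
    intro m hmn x hx i hi
    induction i, hi using Nat.le_induction with
    | base =>
      intro h1m
      have h := hx 1 le_rfl (by omega)
      rw [if_neg (by omega), if_pos h1m, if_pos rfl] at h
      have ha : (0:ℝ) < a 1 1 := ha_diag 1 le_rfl (by omega)
      rw [hcp1]
      show x 1 = ta 1 / a 1 1 - a 1 2 / a 1 1 * x 2
      field_simp
      linarith
    | succ i hi ih =>
      intro him
      have hxi := ih (by omega)
      have h := hx (i+1) (by omega) (by omega)
      rw [if_pos (by omega : 2 ≤ i + 1), if_pos him, if_neg (by omega)] at h
      simp only [Nat.add_sub_cancel] at h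
      have hd := hd_pos (i+1) (by omega) (by omega)
      simp only [Nat.add_sub_cancel] at hd
      have hcpS := hcp (i+1) (by omega) (by omega)
      simp only [Nat.add_sub_cancel] at hcpS
      obtain ⟨k, rfl⟩ : ∃ k, i = k + 1 := ⟨i-1, by omega⟩
      rw [hxi] at h
      rw [hcpS, eSeq_succ]
      field_simp
      linear_combination -h
  -- last component of a solution of `(S_m)`
  have hlast : ∀ m, 1 ≤ m → m ≤ n → ∀ x, IsSolS a ta m x → x m = eSeq a ta cp m := by
    intro m h1 hmn x hx
    rcases Nat.lt_or_ge m 2 with hm2 | hm2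
    · obtain rfl : m = 1 := by omega
      have h := hx 1 le_rfl le_rfl
      rw [if_neg (by omega), if_neg (by omega), if_pos rfl] at h
      have ha : (0:ℝ) < a 1 1 := ha_diag 1 le_rfl (by omega)
      show x 1 = ta 1 / a 1 1
      field_simp
      linarith
    · obtain ⟨k, rfl⟩ : ∃ k, m = k + 2 := ⟨m - 2, by omega⟩
      have h := hx (k+2) (by omega) le_rfl
      rw [if_pos (by omega), if_neg (by omega), if_neg (by omega)] at h
      have e1 : k + 2 - 1 = k + 1 := by omega
      rw [e1] at h
      have hxi := hrec (k+2) hmn x hx (k+1) (by omega) (by omega)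
      have hd := hd_pos (k+2) (by omega) hmn
      rw [e1] at hd
      rw [hxi] at h
      rw [eSeq_succ]
      field_simp
      linear_combination -h
  -- put things together
  have hjn' : j + 1 ≤ n := by omega
  have hd : 0 < a (j+1) (j+1) + a (j+1) j * cp j := by
    have := hd_pos (j+1) (by omega) hjn'
    simpa using this
  have hxjj : xj j = eSeq a ta cp j := hlast j hj1 (by omega) xj hxj
  have hx1j : xj1 j = eSeq a ta cp j - cp j * xj1 (j+1) :=
    hrec (j+1) hjn' xj1 hxj1 j hj1 (by omega)
  have hleq := hxj1 (j+1) (by omega) le_rfl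
  rw [if_pos (by omega), if_neg (by omega), if_neg (by omega)] at hleq
  simp only [Nat.add_sub_cancel] at hleq
  have hx : xj1 (j+1) = I / (a (j+1) (j+1) + a (j+1) j * cp j) := by
    rw [hI, hxjj]
    rw [hx1j] at hleq
    field_simp
    linear_combination -hleq
  refine ⟨hd, hx, ?_, ?_, ?_⟩
  · rw [hx]
    constructor
    · intro h
      rcases div_pos_iff.mp h with ⟨h1, _⟩ | ⟨_, h2⟩
      · exact h1
      · linarith
    · intro h; exact div_pos h hd
  · rw [hx, div_eq_zero_iff]
    constructor
    · rintro (h | h)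
      · exact h
      · exact absurd h hd.ne'
    · intro h; exact Or.inl h
  · rw [hx]
    constructor
    · intro h
      rcases div_neg_iff.mp h with ⟨_, h2⟩ | ⟨h1, _⟩
      · linarith
      · exact h1
    · intro h; exact div_neg_of_neg_of_pos h hd
end

section
/- (Lemma, first claim.) For every 1 ≤ k ≤ n−1: if I_k ≤ 0, then I_{k+1} < 0. -/
/-- (Lemma, first claim.)  With the invasion rates `I_1 = ã_{10}` and
`I_{j+1} = −ã_{j+1,0} + a_{j+1,j} x_j^{(j)}` (where `x^{(j)}` is the unique solution
of `(S_j)`), for every `1 ≤ k ≤ n−1`: if `I_k ≤ 0` then `I_{k+1} < 0`. -/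
theorem stmt4 (n : ℕ) (hn : 2 ≤ n) (a : ℕ → ℕ → ℝ) (ta : ℕ → ℝ)
    (ha_diag : ∀ i, 1 ≤ i → i ≤ n → 0 < a i i)
    (ha_sub : ∀ i, 2 ≤ i → i ≤ n → 0 < a i (i - 1))
    (ha_sup : ∀ i, 1 ≤ i → i ≤ n - 1 → 0 < a i (i + 1))
    (hta : ∀ i, 2 ≤ i → i ≤ n → 0 < ta i)
    (x : ℕ → ℕ → ℝ)
    (hx : ∀ j, 1 ≤ j → j ≤ n → IsSolS a ta j (x j))
    (I : ℕ → ℝ)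
    (hI1 : I 1 = ta 1)
    (hI : ∀ j, 1 ≤ j → j ≤ n - 1 → I (j + 1) = -ta (j + 1) + a (j + 1) j * x j j) :
    ∀ k, 1 ≤ k → k ≤ n - 1 → I k ≤ 0 → I (k + 1) < 0 := by
  intro k hk1 hkn hIk
  have hta' : 0 < ta (k + 1) := hta (k + 1) (by omega) (by omega)
  have hsub' : 0 < a (k + 1) k := by
    have := ha_sub (k + 1) (by omega) (by omega)
    simpa using this
  suffices hxkk : x k k ≤ 0 by
    rw [hI k hk1 hkn]
    have := mul_nonpos_of_nonneg_of_nonpos hsub'.le hxkk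
    linarith
  rcases eq_or_lt_of_le hk1 with hk | hk2
  · -- k = 1
    have e := hx 1 le_rfl (by omega) 1 le_rfl le_rfl
    rw [if_neg (by norm_num), if_neg (by norm_num), if_pos rfl] at e
    rw [← hk] at hIk ⊢
    rw [hI1] at hIk
    have ha1 : 0 < a 1 1 := ha_diag 1 le_rfl (by omega)
    nlinarith
  · -- k ≥ 2
    set y : ℕ → ℝ := fun i => if i = 0 then (0 : ℝ) else if k ≤ i then x k i
      else x k i - x (k - 1) i with hydef
    have hy0 : y 0 = 0 := by simp [hydef]
    have hyk : y k = x k k := by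
      simp only [hydef]; rw [if_neg (by omega), if_pos le_rfl]
    have hym : ∀ i, 1 ≤ i → i ≤ k - 1 → y i = x k i - x (k - 1) i := by
      intro i h1 h2
      simp only [hydef]; rw [if_neg (by omega), if_neg (by omega)]
    have hxk := hx k (by omega) (by omega)
    have hxk1 := hx (k - 1) (by omega) (by omega)
    have hrow : ∀ i, 1 ≤ i → i ≤ k - 1 →
        a i (i - 1) * y (i - 1) - a i i * y i - a i (i + 1) * y (i + 1) = 0 := by
      intro i h1 h2
      have e1 := hxk i h1 (by omega)
      have e2 := hxk1 i h1 h2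
      have hik : i < k := by omega
      rw [if_pos hik] at e1
      by_cases h2i : 2 ≤ i
      · rw [if_pos h2i, if_neg (by omega : ¬ i = 1)] at e1 e2
        rw [hym i h1 h2, hym (i - 1) (by omega) (by omega)]
        by_cases hik1 : i < k - 1
        · rw [if_pos hik1] at e2
          rw [hym (i + 1) (by omega) (by omega)]
          linarith
        · rw [if_neg hik1] at e2
          have hk' : i + 1 = k := by omega
          rw [hk'] at e1 ⊢
          rw [hyk]
          linarith
      · have hi1 : i = 1 := by omega
        subst hi1
        rw [if_neg h2i, if_pos rfl] at e1 e2
        rw [hym 1 le_rfl h2, show (1 : ℕ) - 1 = 0 from rfl, hy0]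
        by_cases hik1 : (1 : ℕ) < k - 1
        · rw [if_pos hik1] at e2
          rw [hym (1 + 1) (by omega) (by omega)]
          linarith
        · rw [if_neg hik1] at e2
          have hk' : (1 : ℕ) + 1 = k := by omega
          rw [hk'] at e1 ⊢
          rw [hyk]
          linarith
    have hP : ∀ i, 1 ≤ i → i ≤ k - 1 →
        ((0 < y i → y (i + 1) < 0) ∧ (y i < 0 → 0 < y (i + 1)) ∧
          (y i = 0 → y (i + 1) = 0)) := by
      intro i hi1
      induction i, hi1 using Nat.le_induction with
      | base =>
        intro hk1'
        have e := hrow 1 le_rfl hk1'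
        rw [show (1 : ℕ) - 1 = 0 from rfl, hy0] at e
        have ha1 : 0 < a 1 1 := ha_diag 1 le_rfl (by omega)
        have ha2 : 0 < a 1 (1 + 1) := ha_sup 1 le_rfl (by omega)
        refine ⟨?_, ?_, ?_⟩
        · intro h; nlinarith
        · intro h; nlinarith
        · intro h
          have h0 : a 1 (1 + 1) * y (1 + 1) = 0 := by rw [h] at e; linarith
          rcases mul_eq_zero.mp h0 with h' | h'
          · exact absurd h' (ne_of_gt ha2)
          · exact h'
      | succ i hi ih =>
        intro hik
        obtain ⟨p1, p2, p3⟩ := ih (by omega)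
        have e := hrow (i + 1) (by omega) hik
        simp only [Nat.add_sub_cancel] at e
        have has : 0 < a (i + 1) i := by
          have := ha_sub (i + 1) (by omega) (by omega)
          simpa using this
        have had : 0 < a (i + 1) (i + 1) := ha_diag (i + 1) (by omega) (by omega)
        have hasup : 0 < a (i + 1) (i + 1 + 1) := ha_sup (i + 1) (by omega) (by omega)
        refine ⟨?_, ?_, ?_⟩
        · intro h
          have hyi : y i < 0 := by
            rcases lt_trichotomy (y i) 0 with h' | h' | h'
            · exact h'
            · linarith [p3 h']
            · linarith [p1 h']
          nlinarith
        · intro h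
          have hyi : 0 < y i := by
            rcases lt_trichotomy (y i) 0 with h' | h' | h'
            · linarith [p2 h']
            · linarith [p3 h']
            · exact h'
          nlinarith
        · intro h
          have hyi : y i = 0 := by
            rcases lt_trichotomy (y i) 0 with h' | h' | h'
            · linarith [p2 h']
            · exact h'
            · linarith [p1 h']
          have h0 : a (i + 1) (i + 1 + 1) * y (i + 1 + 1) = 0 := by
            rw [h, hyi] at e; linarith
          rcases mul_eq_zero.mp h0 with h' | h'
          · exact absurd h' (ne_of_gt hasup)
          · exact h'
    have hlast := hxk k (by omega) le_rfl
    rw [if_pos (by omega : 2 ≤ k), if_neg (lt_irrefl k),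
      if_neg (by omega : ¬ k = 1)] at hlast
    have hIkeq := hI (k - 1) (by omega) (by omega)
    rw [show k - 1 + 1 = k by omega] at hIkeq
    rw [hIkeq] at hIk
    have hkey : a k k * x k k ≤ a k (k - 1) * y (k - 1) := by
      rw [hym (k - 1) (by omega) le_rfl]
      nlinarith
    by_contra hpos
    push_neg at hpos
    obtain ⟨p1, p2, p3⟩ := hP (k - 1) (by omega) le_rfl
    rw [show k - 1 + 1 = k by omega, hyk] at p1 p2 p3
    have hyneg : y (k - 1) < 0 := by
      rcases lt_trichotomy (y (k - 1)) 0 with h | h | h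
      · exact h
      · linarith [p3 h]
      · linarith [p1 h]
    have hneg : a k (k - 1) * y (k - 1) < 0 :=
      mul_neg_of_pos_of_neg (ha_sub k (by omega) (by omega)) hyneg
    nlinarith [mul_pos (ha_diag k (by omega) (by omega)) hpos]
end

section
/- (Proposition.) Suppose there exists j* with 1 ≤ j* ≤ n−1 such that I_{j*+1} < 0. Then for every m with j*+1 ≤ m ≤ n, the unique solution of the system (S_m) satisfies x_m^{(m)} < 0; in particular, for every such m the system (S_m) has no solution with all coordinates strictly positive. -/
/-- Elimination coefficients: `ab i = (α i, β i)` with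
`x i = α i - β i * x (i+1)` for any solution of a long enough system. -/
noncomputable def ab (a : ℕ → ℕ → ℝ) (ta : ℕ → ℝ) : ℕ → ℝ × ℝ
  | 0 => (0, 0)
  | 1 => (ta 1 / a 1 1, a 1 2 / a 1 1)
  | (i+2) =>
      ((a (i+2) (i+1) * (ab a ta (i+1)).1 - ta (i+2)) /
          (a (i+2) (i+2) + a (i+2) (i+1) * (ab a ta (i+1)).2),
       a (i+2) (i+3) /
          (a (i+2) (i+2) + a (i+2) (i+1) * (ab a ta (i+1)).2))

lemma bpos (n : ℕ) (hn : 2 ≤ n) (a : ℕ → ℕ → ℝ) (ta : ℕ → ℝ)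
    (ha_diag : ∀ i, 1 ≤ i → i ≤ n → 0 < a i i)
    (ha_sub : ∀ i, 2 ≤ i → i ≤ n → 0 < a i (i - 1))
    (ha_sup : ∀ i, 1 ≤ i → i ≤ n - 1 → 0 < a i (i + 1)) :
    ∀ i, 1 ≤ i → i ≤ n - 1 → 0 < (ab a ta i).2 := by
  intro i
  induction i using Nat.strong_induction_on with
  | _ i ih =>
    match i with
    | 0 => omega
    | 1 =>
      intro _ h
      simp only [ab]
      exact div_pos (ha_sup 1 le_rfl h) (ha_diag 1 le_rfl (by omega))
    | (k+2) =>
      intro _ h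
      have hb : 0 < (ab a ta (k+1)).2 := ih (k+1) (by omega) (by omega) (by omega)
      have hsub : 0 < a (k+2) (k+1) := by
        have := ha_sub (k+2) (by omega) (by omega); simpa using this
      have hc : 0 < a (k+2) (k+2) + a (k+2) (k+1) * (ab a ta (k+1)).2 := by
        have := ha_diag (k+2) (by omega) (by omega)
        positivity
      simp only [ab]
      exact div_pos (ha_sup (k+2) (by omega) h) hc

lemma cpos (n : ℕ) (hn : 2 ≤ n) (a : ℕ → ℕ → ℝ) (ta : ℕ → ℝ)
    (ha_diag : ∀ i, 1 ≤ i → i ≤ n → 0 < a i i)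
    (ha_sub : ∀ i, 2 ≤ i → i ≤ n → 0 < a i (i - 1))
    (ha_sup : ∀ i, 1 ≤ i → i ≤ n - 1 → 0 < a i (i + 1)) :
    ∀ k, k + 2 ≤ n → 0 < a (k+2) (k+2) + a (k+2) (k+1) * (ab a ta (k+1)).2 := by
  intro k hk
  have hb : 0 < (ab a ta (k+1)).2 :=
    bpos n hn a ta ha_diag ha_sub ha_sup (k+1) (by omega) (by omega)
  have hsub : 0 < a (k+2) (k+1) := by
    have := ha_sub (k+2) (by omega) (by omega); simpa using this
  have := ha_diag (k+2) (by omega) (by omega)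
  positivity

lemma sol_rec (n : ℕ) (hn : 2 ≤ n) (a : ℕ → ℕ → ℝ) (ta : ℕ → ℝ)
    (ha_diag : ∀ i, 1 ≤ i → i ≤ n → 0 < a i i)
    (ha_sub : ∀ i, 2 ≤ i → i ≤ n → 0 < a i (i - 1))
    (ha_sup : ∀ i, 1 ≤ i → i ≤ n - 1 → 0 < a i (i + 1))
    (m : ℕ) (hm1 : 1 ≤ m) (hmn : m ≤ n) (y : ℕ → ℝ) (hy : IsSolS a ta m y) :
    ∀ i, 1 ≤ i → i + 1 ≤ m → y i = (ab a ta i).1 - (ab a ta i).2 * y (i+1) := by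
  intro i
  induction i using Nat.strong_induction_on with
  | _ i ih =>
    match i with
    | 0 => omega
    | 1 =>
      intro _ h
      have he := hy 1 le_rfl (by omega)
      simp only [show ¬ (2 ≤ 1) by omega, if_false, if_pos (show (1:ℕ) < m by omega),
        if_pos rfl, if_true] at he
      have ha : a 1 1 ≠ 0 := ne_of_gt (ha_diag 1 le_rfl (by omega))
      simp only [ab]
      field_simp
      linarith
    | (k+2) =>
      intro _ h
      have he := hy (k+2) (by omega) (by omega)
      simp only [if_pos (show (2:ℕ) ≤ k+2 by omega), show k+2-1 = k+1 by omega,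
        if_pos (show k+2 < m by omega), if_neg (show ¬ (k+2 = 1) by omega)] at he
      have hih := ih (k+1) (by omega) (by omega) (by omega)
      have hc : 0 < a (k+2) (k+2) + a (k+2) (k+1) * (ab a ta (k+1)).2 :=
        cpos n hn a ta ha_diag ha_sub ha_sup k (by omega)
      have hc' : a (k+2) (k+2) + a (k+2) (k+1) * (ab a ta (k+1)).2 ≠ 0 := ne_of_gt hc
      rw [hih] at he
      simp only [ab]
      field_simp
      ring_nf
      ring_nf at he
      linarith

lemma sol_last (n : ℕ) (hn : 2 ≤ n) (a : ℕ → ℕ → ℝ) (ta : ℕ → ℝ)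
    (ha_diag : ∀ i, 1 ≤ i → i ≤ n → 0 < a i i)
    (ha_sub : ∀ i, 2 ≤ i → i ≤ n → 0 < a i (i - 1))
    (ha_sup : ∀ i, 1 ≤ i → i ≤ n - 1 → 0 < a i (i + 1))
    (m : ℕ) (hm1 : 1 ≤ m) (hmn : m ≤ n) (y : ℕ → ℝ) (hy : IsSolS a ta m y) :
    y m = (ab a ta m).1 := by
  match m, hm1 with
  | 1, _ =>
    have he := hy 1 le_rfl le_rfl
    simp only [show ¬ (2 ≤ 1) by omega, if_false, show ¬ (1 < 1) by omega,
      if_pos rfl, if_true] at he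
    have ha : a 1 1 ≠ 0 := ne_of_gt (ha_diag 1 le_rfl (by omega))
    simp only [ab]
    field_simp
    linarith
  | (k+2), _ =>
    have he := hy (k+2) (by omega) le_rfl
    simp only [if_pos (show (2:ℕ) ≤ k+2 by omega), show k+2-1 = k+1 by omega,
      if_neg (show ¬ (k+2 < k+2) by omega), if_neg (show ¬ (k+2 = 1) by omega)] at he
    have hih : y (k+1) = (ab a ta (k+1)).1 - (ab a ta (k+1)).2 * y (k+2) :=
      sol_rec n hn a ta ha_diag ha_sub ha_sup (k+2) (by omega) hmn y hy (k+1)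
        (by omega) (by omega)
    have hc : 0 < a (k+2) (k+2) + a (k+2) (k+1) * (ab a ta (k+1)).2 :=
      cpos n hn a ta ha_diag ha_sub ha_sup k (by omega)
    have hc' : a (k+2) (k+2) + a (k+2) (k+1) * (ab a ta (k+1)).2 ≠ 0 := ne_of_gt hc
    rw [hih] at he
    simp only [ab]
    field_simp
    ring_nf
    ring_nf at he
    linarith

/-- (Proposition.)  If there is `1 ≤ j* ≤ n−1` with `I_{j*+1} < 0`, then for every
`j*+1 ≤ m ≤ n` the unique solution of `(S_m)` satisfies `x_m^{(m)} < 0`; in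
particular, for every such `m` the system `(S_m)` has no solution with all
coordinates strictly positive. -/
theorem stmt5 (n : ℕ) (hn : 2 ≤ n) (a : ℕ → ℕ → ℝ) (ta : ℕ → ℝ)
    (ha_diag : ∀ i, 1 ≤ i → i ≤ n → 0 < a i i)
    (ha_sub : ∀ i, 2 ≤ i → i ≤ n → 0 < a i (i - 1))
    (ha_sup : ∀ i, 1 ≤ i → i ≤ n - 1 → 0 < a i (i + 1))
    (hta : ∀ i, 2 ≤ i → i ≤ n → 0 < ta i)
    (x : ℕ → ℕ → ℝ)
    (hx : ∀ j, 1 ≤ j → j ≤ n → IsSolS a ta j (x j))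
    (I : ℕ → ℝ)
    (hI1 : I 1 = ta 1)
    (hI : ∀ j, 1 ≤ j → j ≤ n - 1 → I (j + 1) = -ta (j + 1) + a (j + 1) j * x j j)
    (js : ℕ) (hjs1 : 1 ≤ js) (hjsn : js ≤ n - 1)
    (hneg : I (js + 1) < 0) :
    ∀ m, js + 1 ≤ m → m ≤ n →
      x m m < 0 ∧
      ∀ y : ℕ → ℝ, IsSolS a ta m y → ¬(∀ i, 1 ≤ i → i ≤ m → 0 < y i) := by
  -- α m < 0 for js+1 ≤ m ≤ n
  have key : ∀ m, js + 1 ≤ m → m ≤ n → (ab a ta m).1 < 0 := by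
    intro m hm
    induction m, hm using Nat.le_induction with
    | base =>
      intro hmn
      obtain ⟨k, rfl⟩ : ∃ k, js = k + 1 := ⟨js - 1, by omega⟩
      have hxjs : x (k+1) (k+1) = (ab a ta (k+1)).1 :=
        sol_last n hn a ta ha_diag ha_sub ha_sup (k+1) (by omega) (by omega)
          (x (k+1)) (hx (k+1) (by omega) (by omega))
      have hI' := hI (k+1) (by omega) (by omega)
      rw [hxjs] at hI'
      have hc : 0 < a (k+2) (k+2) + a (k+2) (k+1) * (ab a ta (k+1)).2 :=
        cpos n hn a ta ha_diag ha_sub ha_sup k (by omega)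
      simp only [ab]
      apply div_neg_of_neg_of_pos _ hc
      linarith [hneg, hI'.symm.trans_lt hneg]
    | succ m hm2 ih =>
      intro hmn
      have hα : (ab a ta m).1 < 0 := ih (by omega)
      obtain ⟨k, rfl⟩ : ∃ k, m = k + 1 := ⟨m - 1, by omega⟩
      have hc : 0 < a (k+2) (k+2) + a (k+2) (k+1) * (ab a ta (k+1)).2 :=
        cpos n hn a ta ha_diag ha_sub ha_sup k (by omega)
      have hsub : 0 < a (k+2) (k+1) := by
        have := ha_sub (k+2) (by omega) (by omega); simpa using this
      have hta' : 0 < ta (k+2) := hta (k+2) (by omega) (by omega)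
      simp only [ab]
      apply div_neg_of_neg_of_pos _ hc
      nlinarith
  intro m hm1 hmn
  have hxm : x m m = (ab a ta m).1 :=
    sol_last n hn a ta ha_diag ha_sub ha_sup m (by omega) hmn (x m)
      (hx m (by omega) hmn)
  have hα := key m hm1 hmn
  refine ⟨hxm ▸ hα, fun y hy hpos => ?_⟩
  have := sol_last n hn a ta ha_diag ha_sub ha_sup m (by omega) hmn y hy
  have := hpos m (by omega) le_rfl
  linarith
end

section
/- Fix 1 ≤ j ≤ n and view the last coordinate x_j^{(j)} of the unique solution of (S_j) as a function of the vector (ã_{10}, ã_{20}, …, ã_{j0}) ∈ ℝ^j (the interaction coefficients a being fixed; the system is uniquely solvable for all values of the ã's). Then x_j^{(j)} is strictly increasing in ã_{10}, and strictly decreasing in ã_{i0} for every 2 ≤ i ≤ j. -/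
set_option maxHeartbeats 2000000 in
/-- Viewing the last coordinate `x_j^{(j)}` of the unique solution of `(S_j)` as a
function of `(ã_{10}, …, ã_{j0}) ∈ ℝ^j` (the interaction coefficients `a` being
fixed), `x_j^{(j)}` is strictly increasing in `ã_{10}` and strictly decreasing in
`ã_{i0}` for every `2 ≤ i ≤ j`. -/
theorem stmt7 (n : ℕ) (hn : 1 ≤ n) (a : ℕ → ℕ → ℝ)
    (ha_diag : ∀ i, 1 ≤ i → i ≤ n → 0 < a i i)
    (ha_sub : ∀ i, 2 ≤ i → i ≤ n → 0 < a i (i - 1))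
    (ha_sup : ∀ i, 1 ≤ i → i ≤ n - 1 → 0 < a i (i + 1))
    (j : ℕ) (hj1 : 1 ≤ j) (hjn : j ≤ n)
    (ta ta' : ℕ → ℝ) (x x' : ℕ → ℝ)
    (hx : IsSolS a ta j x) (hx' : IsSolS a ta' j x') :
    ((ta 1 < ta' 1 ∧ ∀ i, 2 ≤ i → i ≤ j → ta i = ta' i) → x j < x' j) ∧
    (∀ u, 2 ≤ u → u ≤ j →
      (ta u < ta' u ∧ ∀ i, 1 ≤ i → i ≤ j → i ≠ u → ta i = ta' i) → x' j < x j) := by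
  have key : ∀ i, 1 ≤ i → i ≤ j →
      (if 2 ≤ i then a i (i-1) * (x' (i-1) - x (i-1)) else 0)
        - a i i * (x' i - x i)
        - (if i < j then a i (i+1) * (x' (i+1) - x (i+1)) else 0)
      = (if i = 1 then -(ta' 1 - ta 1) else ta' i - ta i) := by
    intro i h1 h2
    have h := hx i h1 h2
    have h' := hx' i h1 h2
    split_ifs at h h' ⊢ <;> ring_nf at h h' ⊢ <;> linarith
  constructor
  · rintro ⟨hlt, heq⟩
    by_contra hcon
    push_neg at hcon
    have claim : ∀ m i, 1 ≤ i → i ≤ j → j ≤ i + m → x' i - x i ≤ 0 := by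
      intro m
      induction m with
      | zero =>
        intro i h1 h2 h3
        have hij : i = j := by omega
        subst hij
        linarith
      | succ m ih =>
        intro i h1 h2 h3
        by_cases hc : j ≤ i + m
        · exact ih i h1 h2 hc
        · have hij : i < j := by omega
          have hk := key (i+1) (by omega) (by omega)
          rw [if_pos (by omega : 2 ≤ i + 1), if_neg (by omega : ¬ i + 1 = 1)] at hk
          have hd : ta' (i+1) - ta (i+1) = 0 := by
            have := heq (i+1) (by omega) (by omega); linarith
          simp only [Nat.add_sub_cancel] at hk
          have hsub : 0 < a (i+1) i := by
            have := ha_sub (i+1) (by omega) (by omega)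
            simpa using this
          have hy1 : x' (i+1) - x (i+1) ≤ 0 := ih (i+1) (by omega) (by omega) (by omega)
          have hdiag := ha_diag (i+1) (by omega) (by omega)
          by_cases hlt2 : i + 1 < j
          · rw [if_pos hlt2] at hk
            have hy2 := ih (i+1+1) (by omega) (by omega) (by omega)
            have hsup := ha_sup (i+1) (by omega) (by omega)
            nlinarith [mul_nonpos_of_nonneg_of_nonpos hdiag.le hy1,
              mul_nonpos_of_nonneg_of_nonpos hsup.le hy2]
          · rw [if_neg hlt2] at hk
            nlinarith [mul_nonpos_of_nonneg_of_nonpos hdiag.le hy1]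
    have hk1 := key 1 le_rfl hj1
    rw [if_neg (by norm_num : ¬ (2:ℕ) ≤ 1), if_pos rfl] at hk1
    have hy1 : x' 1 - x 1 ≤ 0 := claim j 1 le_rfl hj1 (by omega)
    have hd1 : 0 < ta' 1 - ta 1 := by linarith
    have hdiag1 := ha_diag 1 le_rfl hn
    by_cases h1j : 1 < j
    · rw [if_pos h1j] at hk1
      have hy2 := claim j (1+1) (by omega) (by omega) (by omega)
      have hsup := ha_sup 1 le_rfl (by omega)
      nlinarith [mul_nonpos_of_nonneg_of_nonpos hdiag1.le hy1,
        mul_nonpos_of_nonneg_of_nonpos hsup.le hy2]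
    · rw [if_neg h1j] at hk1
      nlinarith [mul_nonpos_of_nonneg_of_nonpos hdiag1.le hy1]
  · rintro u hu2 huj ⟨hlt, heq⟩
    by_contra hcon
    push_neg at hcon
    -- Phase A: y i ≥ 0 for u ≤ i ≤ j
    have claimA : ∀ m i, u ≤ i → i ≤ j → j ≤ i + m → 0 ≤ x' i - x i := by
      intro m
      induction m with
      | zero =>
        intro i h1 h2 h3
        have hij : i = j := by omega
        subst hij
        linarith
      | succ m ih =>
        intro i h1 h2 h3
        by_cases hc : j ≤ i + m
        · exact ih i h1 h2 hc
        · have hij : i < j := by omega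
          have hk := key (i+1) (by omega) (by omega)
          rw [if_pos (by omega : 2 ≤ i + 1), if_neg (by omega : ¬ i + 1 = 1)] at hk
          have hd : ta' (i+1) - ta (i+1) = 0 := by
            have := heq (i+1) (by omega) (by omega) (by omega); linarith
          simp only [Nat.add_sub_cancel] at hk
          have hsub : 0 < a (i+1) i := by
            have := ha_sub (i+1) (by omega) (by omega)
            simpa using this
          have hy1 : 0 ≤ x' (i+1) - x (i+1) := ih (i+1) (by omega) (by omega) (by omega)
          have hdiag := ha_diag (i+1) (by omega) (by omega)
          by_cases hlt2 : i + 1 < j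
          · rw [if_pos hlt2] at hk
            have hy2 := ih (i+1+1) (by omega) (by omega) (by omega)
            have hsup := ha_sup (i+1) (by omega) (by omega)
            nlinarith [mul_nonneg hdiag.le hy1, mul_nonneg hsup.le hy2]
          · rw [if_neg hlt2] at hk
            nlinarith [mul_nonneg hdiag.le hy1]
    -- Phase B: y (u-1) > 0
    have hB : 0 < x' (u-1) - x (u-1) := by
      have hk := key u (by omega) huj
      rw [if_pos hu2, if_neg (by omega : ¬ u = 1)] at hk
      have hyu : 0 ≤ x' u - x u := claimA j u le_rfl huj (by omega)
      have hsub : 0 < a u (u-1) := ha_sub u hu2 (by omega)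
      have hdiag := ha_diag u (by omega) (by omega)
      have hdu : 0 < ta' u - ta u := by linarith
      by_cases hlt2 : u < j
      · rw [if_pos hlt2] at hk
        have hy2 := claimA j (u+1) (by omega) (by omega) (by omega)
        have hsup := ha_sup u (by omega) (by omega)
        nlinarith [mul_nonneg hdiag.le hyu, mul_nonneg hsup.le hy2]
      · rw [if_neg hlt2] at hk
        nlinarith [mul_nonneg hdiag.le hyu]
    -- Phase C: y i > 0 for 1 ≤ i ≤ u-1
    have claimC : ∀ m i, 1 ≤ i → i ≤ u - 1 → u - 1 ≤ i + m →
        0 < x' i - x i ∧ 0 ≤ x' (i+1) - x (i+1) := by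
      intro m
      induction m with
      | zero =>
        intro i h1 h2 h3
        have hiv : i = u - 1 := by omega
        subst hiv
        have huu : u - 1 + 1 = u := by omega
        rw [huu]
        exact ⟨hB, claimA j u le_rfl huj (by omega)⟩
      | succ m ih =>
        intro i h1 h2 h3
        by_cases hc : u - 1 ≤ i + m
        · exact ih i h1 h2 hc
        · have hiv : i < u - 1 := by omega
          obtain ⟨hy1, hy2⟩ := ih (i+1) (by omega) (by omega) (by omega)
          have hk := key (i+1) (by omega) (by omega)
          rw [if_pos (by omega : 2 ≤ i + 1), if_neg (by omega : ¬ i + 1 = 1),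
            if_pos (by omega : i + 1 < j)] at hk
          have hd : ta' (i+1) - ta (i+1) = 0 := by
            have := heq (i+1) (by omega) (by omega) (by omega); linarith
          simp only [Nat.add_sub_cancel] at hk
          have hsub : 0 < a (i+1) i := by
            have := ha_sub (i+1) (by omega) (by omega)
            simpa using this
          have hdiag := ha_diag (i+1) (by omega) (by omega)
          have hsup := ha_sup (i+1) (by omega) (by omega)
          refine ⟨?_, hy1.le⟩
          nlinarith [mul_pos hdiag hy1, mul_nonneg hsup.le hy2]
    -- Final: row 1 gives a contradiction
    have hk1 := key 1 le_rfl hj1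
    rw [if_neg (by norm_num : ¬ (2:ℕ) ≤ 1), if_pos rfl, if_pos (by omega : 1 < j)] at hk1
    have hd1 : ta' 1 - ta 1 = 0 := by
      have := heq 1 le_rfl hj1 (by omega); linarith
    obtain ⟨hy1, hy2⟩ := claimC u 1 le_rfl (by omega) (by omega)
    have hdiag1 := ha_diag 1 le_rfl hn
    have hsup := ha_sup 1 le_rfl (by omega)
    nlinarith [mul_pos hdiag1 hy1, mul_nonneg hsup.le hy2]
end

section
/- (Monotonicity of the invasion rates in the noise intensities.) Set ã_{10} := a_{10} − σ_1/2 and ã_{i0} := a_{i0} + σ_i/2 for 2 ≤ i ≤ n, where a_{10} ∈ ℝ, a_{i0} > 0 and (σ_1,…,σ_n) ∈ [0,∞)^n. Then for every 1 ≤ j ≤ n, the invasion rate I_j, viewed as a function of (σ_1,…,σ_n), is strictly decreasing in σ_u for each 1 ≤ u ≤ j, and does not depend on σ_u for u > j. -/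
lemma IsSolS.sub {a : ℕ → ℕ → ℝ} {ta ta' : ℕ → ℝ} {j : ℕ} {x x' : ℕ → ℝ}
    (h : IsSolS a ta j x) (h' : IsSolS a ta' j x') :
    IsSolS a (fun i => ta' i - ta i) j (fun i => x' i - x i) := by
  intro i h1 h2
  have e := h i h1 h2
  have e' := h' i h1 h2
  simp only
  split_ifs at e e' ⊢ <;> linear_combination e' - e

lemma key (a : ℕ → ℕ → ℝ) (j : ℕ) (hj : 1 ≤ j)
    (hdiag : ∀ i, 1 ≤ i → i ≤ j → 0 < a i i)
    (hsub : ∀ i, 2 ≤ i → i ≤ j → 0 < a i (i - 1))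
    (hsup : ∀ i, 1 ≤ i → i < j → 0 < a i (i + 1))
    (r d : ℕ → ℝ) (hd : IsSolS a r j d) (hr1 : r 1 ≤ 0)
    (hri : ∀ i, 2 ≤ i → i ≤ j → 0 ≤ r i) (hdj : 0 ≤ d j) :
    (∀ i, 1 ≤ i → i ≤ j → d i = 0) ∧ (∀ i, 1 ≤ i → i ≤ j → r i = 0) := by
  have eqn : ∀ i, 1 ≤ i → i + 1 ≤ j →
      a (i+1) i * d i - a (i+1) (i+1) * d (i+1)
        - (if i + 1 < j then a (i+1) (i+2) * d (i+2) else 0) = r (i+1) := by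
    intro i h1 h2
    have e := hd (i+1) (by omega) h2
    rw [if_pos (by omega : 2 ≤ i + 1), if_neg (by omega : ¬ i + 1 = 1)] at e
    simpa using e
  have eq1 := hd 1 le_rfl hj
  rw [if_neg (by omega : ¬ 2 ≤ 1), if_pos rfl] at eq1
  have nonneg : ∀ m i, 1 ≤ i → i ≤ j → j ≤ i + m → 0 ≤ d i := by
    intro m
    induction m with
    | zero =>
      intro i h1 h2 h3
      have hij : i = j := by omega
      rw [hij]; exact hdj
    | succ m ih =>
      intro i h1 h2 h3
      by_cases hij : i = j
      · rw [hij]; exact hdj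
      · have h2' : i + 1 ≤ j := by omega
        have e := eqn i h1 h2'
        have hdp : 0 ≤ d (i+1) := ih (i+1) (by omega) h2' (by omega)
        have hsp : 0 ≤ (if i + 1 < j then a (i+1) (i+2) * d (i+2) else 0) := by
          split_ifs with h
          · exact mul_nonneg (hsup (i+1) (by omega) h).le (ih (i+2) (by omega) (by omega) (by omega))
          · exact le_rfl
        have hsubp := hsub (i+1) (by omega) h2'
        simp only [Nat.add_sub_cancel] at hsubp
        have hrp := hri (i+1) (by omega) h2'
        have hdig := hdiag (i+1) (by omega) h2'
        nlinarith [mul_nonneg hdig.le hdp]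
  have hd1 : 0 ≤ d 1 := nonneg j 1 le_rfl hj (by omega)
  have hS1 : 0 ≤ (if 1 < j then a 1 2 * d 2 else 0) := by
    split_ifs with h
    · exact mul_nonneg (hsup 1 le_rfl h).le (nonneg j 2 (by omega) h (by omega))
    · exact le_rfl
  have h11 := hdiag 1 le_rfl hj
  have hd1z : d 1 = 0 := by nlinarith
  have hr1z : r 1 = 0 := by nlinarith [mul_nonneg h11.le hd1]
  have hd2z : ∀ _ : 1 < j, d 2 = 0 := by
    intro h
    rw [if_pos h] at eq1
    have hsupp := hsup 1 le_rfl h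
    have he : a 1 2 * d 2 = 0 := by rw [hd1z] at eq1; rw [hr1z] at eq1; linarith
    rcases mul_eq_zero.mp he with h' | h'
    · exact absurd h' (ne_of_gt hsupp)
    · exact h'
  have dz : ∀ i, 1 ≤ i → (i ≤ j → d i = 0) ∧ (i + 1 ≤ j → d (i+1) = 0) := by
    intro i
    induction i with
    | zero => intro h; omega
    | succ i ih =>
      intro _
      by_cases hi : i = 0
      · subst hi; exact ⟨fun _ => hd1z, fun h2 => hd2z (by omega)⟩
      · have ih' := ih (by omega)
        refine ⟨ih'.2, ?_⟩
        intro h2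
        have e := eqn i (by omega) (by omega)
        rw [if_pos (show i + 1 < j by omega), ih'.1 (by omega), ih'.2 (by omega)] at e
        have hrp := hri (i+1) (by omega) (by omega)
        have hsupp := hsup (i+1) (by omega) (by omega)
        have hnn := nonneg j (i+2) (by omega) h2 (by omega)
        have hle : d (i+2) ≤ 0 := by nlinarith
        linarith
  have rz : ∀ i, 1 ≤ i → i ≤ j → r i = 0 := by
    intro i h1 h2
    rcases eq_or_ne i 1 with h | h
    · rw [h]; exact hr1z
    · obtain ⟨i', rfl⟩ : ∃ i', i = i' + 1 := ⟨i - 1, by omega⟩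
      have e := eqn i' (by omega) h2
      rw [(dz i' (by omega)).1 (by omega), (dz i' (by omega)).2 (by omega)] at e
      split_ifs at e with hc
      · rw [(dz (i'+1) (by omega)).2 (by omega)] at e; linarith
      · linarith
  exact ⟨fun i h1 h2 => (dz i h1).1 h2, rz⟩

lemma uniq (a : ℕ → ℕ → ℝ) (j : ℕ) (hj : 1 ≤ j)
    (hdiag : ∀ i, 1 ≤ i → i ≤ j → 0 < a i i)
    (hsub : ∀ i, 2 ≤ i → i ≤ j → 0 < a i (i - 1))
    (hsup : ∀ i, 1 ≤ i → i < j → 0 < a i (i + 1))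
    (ta ta' : ℕ → ℝ) (x x' : ℕ → ℝ)
    (h : IsSolS a ta j x) (h' : IsSolS a ta' j x')
    (hta : ∀ i, 1 ≤ i → i ≤ j → ta' i = ta i) :
    ∀ i, 1 ≤ i → i ≤ j → x' i = x i := by
  rcases le_total 0 (x' j - x j) with hc | hc
  · have hk := (key a j hj hdiag hsub hsup _ _ (h.sub h')
      (by simp [hta 1 le_rfl hj]) (fun i h2 hij => by simp [hta i (by omega) hij]) hc).1
    intro i h1 h2
    have h0 : x' i - x i = 0 := hk i h1 h2
    linarith
  · have hk := (key a j hj hdiag hsub hsup _ _ (h'.sub h)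
      (by simp [hta 1 le_rfl hj]) (fun i h2 hij => by simp [hta i (by omega) hij])
      (show (0:ℝ) ≤ x j - x' j by linarith)).1
    intro i h1 h2
    have h0 : x i - x' i = 0 := hk i h1 h2
    linarith

/-- (Monotonicity of the invasion rates in the noise intensities.)
Set `ã_{10} = a_{10} − σ_1/2` and `ã_{i0} = a_{i0} + σ_i/2` for `2 ≤ i ≤ n`, with
`(σ_1, …, σ_n) ∈ [0,∞)^n`.  Then for every `1 ≤ j ≤ n`, the invasion rate `I_j`,
viewed as a function of `(σ_1, …, σ_n)`, is strictly decreasing in `σ_u` for each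
`1 ≤ u ≤ j`, and does not depend on `σ_u` for `u > j` (i.e. it is determined by
`σ_1, …, σ_j`). -/
theorem stmt8 (n : ℕ) (hn : 1 ≤ n) (a : ℕ → ℕ → ℝ) (a0 : ℕ → ℝ)
    (ha_diag : ∀ i, 1 ≤ i → i ≤ n → 0 < a i i)
    (ha_sub : ∀ i, 2 ≤ i → i ≤ n → 0 < a i (i - 1))
    (ha_sup : ∀ i, 1 ≤ i → i ≤ n - 1 → 0 < a i (i + 1))
    (ha0 : ∀ i, 2 ≤ i → i ≤ n → 0 < a0 i)
    (σ σ' : ℕ → ℝ)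
    (hσ : ∀ i, 1 ≤ i → i ≤ n → 0 ≤ σ i)
    (hσ' : ∀ i, 1 ≤ i → i ≤ n → 0 ≤ σ' i)
    (ta ta' : ℕ → ℝ)
    (hta1 : ta 1 = a0 1 - σ 1 / 2)
    (htai : ∀ i, 2 ≤ i → i ≤ n → ta i = a0 i + σ i / 2)
    (hta1' : ta' 1 = a0 1 - σ' 1 / 2)
    (htai' : ∀ i, 2 ≤ i → i ≤ n → ta' i = a0 i + σ' i / 2)
    (x x' : ℕ → ℕ → ℝ)
    (hx : ∀ j, 1 ≤ j → j ≤ n → IsSolS a ta j (x j))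
    (hx' : ∀ j, 1 ≤ j → j ≤ n → IsSolS a ta' j (x' j))
    (I I' : ℕ → ℝ)
    (hI1 : I 1 = ta 1)
    (hI : ∀ j, 1 ≤ j → j ≤ n - 1 → I (j + 1) = -ta (j + 1) + a (j + 1) j * x j j)
    (hI1' : I' 1 = ta' 1)
    (hI' : ∀ j, 1 ≤ j → j ≤ n - 1 → I' (j + 1) = -ta' (j + 1) + a (j + 1) j * x' j j) :
    ∀ j, 1 ≤ j → j ≤ n →
      (∀ u, 1 ≤ u → u ≤ j →
        (σ u < σ' u ∧ ∀ v, 1 ≤ v → v ≤ n → v ≠ u → σ v = σ' v) → I' j < I j) ∧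
      ((∀ v, 1 ≤ v → v ≤ j → σ v = σ' v) → I' j = I j) := by
  intro j hj1 hjn
  by_cases hj2 : j = 1
  · subst hj2
    constructor
    · rintro u hu1 huj ⟨hlt, -⟩
      have hu : u = 1 := le_antisymm huj hu1
      subst hu
      rw [hI1, hI1', hta1, hta1']
      linarith
    · intro heqv
      rw [hI1, hI1', hta1, hta1', heqv 1 le_rfl le_rfl]
  · obtain ⟨m, rfl⟩ : ∃ m, j = m + 1 := ⟨j - 1, by omega⟩
    have hm1 : 1 ≤ m := by omega
    have hmn : m ≤ n - 1 := by omega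
    have hIj := hI m hm1 hmn
    have hI'j := hI' m hm1 hmn
    have hxk := hx m hm1 (by omega)
    have hx'k := hx' m hm1 (by omega)
    have hdiag : ∀ i, 1 ≤ i → i ≤ m → 0 < a i i := fun i h1 h2 => ha_diag i h1 (by omega)
    have hsub : ∀ i, 2 ≤ i → i ≤ m → 0 < a i (i - 1) := fun i h1 h2 => ha_sub i h1 (by omega)
    have hsup : ∀ i, 1 ≤ i → i < m → 0 < a i (i + 1) := fun i h1 h2 => ha_sup i h1 (by omega)
    have hapos : 0 < a (m+1) m := by
      have := ha_sub (m+1) (by omega) (by omega)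
      simpa using this
    have htaj : ta (m+1) = a0 (m+1) + σ (m+1) / 2 := htai (m+1) (by omega) (by omega)
    have htaj' : ta' (m+1) = a0 (m+1) + σ' (m+1) / 2 := htai' (m+1) (by omega) (by omega)
    constructor
    · rintro u hu1 huj ⟨hlt, heqv⟩
      have hr : ∀ v, 1 ≤ v → v ≤ n → v ≠ u → ta' v = ta v := by
        intro v h1 h2 hne
        have hs := heqv v h1 h2 hne
        by_cases hv : v = 1
        · subst hv; rw [hta1', hta1, hs]
        · rw [htai' v (by omega) h2, htai v (by omega) h2, hs]
      by_cases huu : u = m + 1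
      · subst huu
        have hz : ∀ v, 1 ≤ v → v ≤ m → ta' v = ta v := fun v h1 h2 =>
          hr v h1 (by omega) (by omega)
        have hxx := uniq a m hm1 hdiag hsub hsup ta ta' (x m) (x' m) hxk hx'k hz m hm1 le_rfl
        rw [hIj, hI'j, hxx, htaj, htaj']
        linarith
      · -- u ≤ m
        have hum : u ≤ m := by omega
        have hdm : x' m m - x m m < 0 := by
          by_contra hc
          push_neg at hc
          have hr1 : ta' 1 - ta 1 ≤ 0 := by
            by_cases hu : u = 1
            · subst hu; rw [hta1', hta1]; linarith
            · rw [hr 1 le_rfl (by omega) (by omega)]; linarith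
          have hri : ∀ i, 2 ≤ i → i ≤ m → 0 ≤ ta' i - ta i := by
            intro i h2 him
            by_cases hiu : i = u
            · subst hiu
              rw [htai' i h2 (by omega), htai i h2 (by omega)]
              linarith
            · rw [hr i (by omega) (by omega) hiu]; linarith
          have hk := key a m hm1 hdiag hsub hsup _ _ (hxk.sub hx'k)
            hr1 (fun i h2 him => hri i h2 him) hc
          have hru : ta' u - ta u = 0 := hk.2 u hu1 hum
          by_cases hu : u = 1
          · subst hu; rw [hta1', hta1] at hru; linarith
          · rw [htai' u (by omega) (by omega), htai u (by omega) (by omega)] at hru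
            linarith
        have htaeq : ta' (m+1) = ta (m+1) := hr (m+1) (by omega) (by omega) (by omega)
        rw [hIj, hI'j, htaeq]
        nlinarith
    · intro heqv
      have hz : ∀ v, 1 ≤ v → v ≤ m → ta' v = ta v := by
        intro v h1 h2
        have hs := heqv v h1 (by omega)
        by_cases hv : v = 1
        · subst hv; rw [hta1', hta1, hs]
        · rw [htai' v (by omega) (by omega), htai v (by omega) (by omega), hs]
      have hxx := uniq a m hm1 hdiag hsub hsup ta ta' (x m) (x' m) hxk hx'k hz m hm1 le_rfl
      have htaeq : ta' (m+1) = ta (m+1) := by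
        rw [htaj, htaj', heqv (m+1) (by omega) le_rfl]
      rw [hIj, hI'j, hxx, htaeq]
end

section
/- (Trophic cascade on the plant.) The difference between the equilibrium plant density with and without the predator satisfies the identity x_1^{(3)} − x_1^{(2)} = (a_{12}a_{23}/(a_{11}a_{22} + a_{12}a_{21})) · x_3^{(3)}. In particular, x_1^{(3)} − x_1^{(2)} > 0 if x_3^{(3)} > 0, and x_1^{(3)} = x_1^{(2)} if x_3^{(3)} = 0. -/
/-- (Trophic cascade on the plant.)  With `(x_1^{(2)}, x_2^{(2)})` the unique
solution of `(S_2)` and `(x_1^{(3)}, x_2^{(3)}, x_3^{(3)})` the unique solution of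
`(S_3)`, one has
`x_1^{(3)} − x_1^{(2)} = (a_{12}a_{23}/(a_{11}a_{22} + a_{12}a_{21})) · x_3^{(3)}`;
in particular `x_1^{(3)} − x_1^{(2)} > 0` if `x_3^{(3)} > 0`, and
`x_1^{(3)} = x_1^{(2)}` if `x_3^{(3)} = 0`. -/
theorem stmt12 (a11 a22 a33 a21 a32 a12 a23 : ℝ)
    (h11 : 0 < a11) (h22 : 0 < a22) (h33 : 0 < a33)
    (h21 : 0 < a21) (h32 : 0 < a32) (h12 : 0 < a12) (h23 : 0 < a23)
    (ta10 ta20 ta30 : ℝ) (h20 : 0 < ta20) (h30 : 0 < ta30)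
    (y1 y2 : ℝ)
    (hy1 : -a11 * y1 - a12 * y2 = -ta10)
    (hy2 : a21 * y1 - a22 * y2 = ta20)
    (x1 x2 x3 : ℝ)
    (hx1 : -a11 * x1 - a12 * x2 = -ta10)
    (hx2 : a21 * x1 - a22 * x2 - a23 * x3 = ta20)
    (hx3 : a32 * x2 - a33 * x3 = ta30) :
    x1 - y1 = (a12 * a23 / (a11 * a22 + a12 * a21)) * x3 ∧
    (0 < x3 → 0 < x1 - y1) ∧
    (x3 = 0 → x1 = y1) := by
  have hD : 0 < a11 * a22 + a12 * a21 := by positivity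
  have key : (a11 * a22 + a12 * a21) * (x1 - y1) = a12 * a23 * x3 := by
    linear_combination (-a22) * hx1 + a22 * hy1 + a12 * hx2 - a12 * hy2
  have heq : x1 - y1 = (a12 * a23 / (a11 * a22 + a12 * a21)) * x3 := by
    field_simp
    linarith [key]
  refine ⟨heq, fun h3 => ?_, fun h3 => ?_⟩
  · rw [heq]; positivity
  · have := heq; rw [h3, mul_zero] at this; linarith
end

section
/- (Trophic cascade on the herbivore.) The difference between the equilibrium herbivore density with and without the predator satisfies the identity x_2^{(3)} − x_2^{(2)} = −(a_{11}a_{23}/(a_{11}a_{22} + a_{12}a_{21})) · x_3^{(3)}. In particular, x_2^{(3)} − x_2^{(2)} < 0 if x_3^{(3)} > 0, and x_2^{(3)} = x_2^{(2)} if x_3^{(3)} = 0. -/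
/-- (Trophic cascade on the herbivore.)  With `(x_1^{(2)}, x_2^{(2)})` the unique
solution of `(S_2)` and `(x_1^{(3)}, x_2^{(3)}, x_3^{(3)})` the unique solution of
`(S_3)`, one has
`x_2^{(3)} − x_2^{(2)} = −(a_{11}a_{23}/(a_{11}a_{22} + a_{12}a_{21})) · x_3^{(3)}`;
in particular `x_2^{(3)} − x_2^{(2)} < 0` if `x_3^{(3)} > 0`, and
`x_2^{(3)} = x_2^{(2)}` if `x_3^{(3)} = 0`. -/
theorem stmt13 (a11 a22 a33 a21 a32 a12 a23 : ℝ)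
    (h11 : 0 < a11) (h22 : 0 < a22) (h33 : 0 < a33)
    (h21 : 0 < a21) (h32 : 0 < a32) (h12 : 0 < a12) (h23 : 0 < a23)
    (ta10 ta20 ta30 : ℝ) (h20 : 0 < ta20) (h30 : 0 < ta30)
    (y1 y2 : ℝ)
    (hy1 : -a11 * y1 - a12 * y2 = -ta10)
    (hy2 : a21 * y1 - a22 * y2 = ta20)
    (x1 x2 x3 : ℝ)
    (hx1 : -a11 * x1 - a12 * x2 = -ta10)
    (hx2 : a21 * x1 - a22 * x2 - a23 * x3 = ta20)
    (hx3 : a32 * x2 - a33 * x3 = ta30) :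
    x2 - y2 = -(a11 * a23 / (a11 * a22 + a12 * a21)) * x3 ∧
    (0 < x3 → x2 - y2 < 0) ∧
    (x3 = 0 → x2 = y2) := by
  have hD : 0 < a11 * a22 + a12 * a21 := by positivity
  have key : (x2 - y2) * (a11 * a22 + a12 * a21) = -(a11 * a23) * x3 := by
    linear_combination (-a21) * hx1 + a21 * hy1 - a11 * hx2 + a11 * hy2
  have main : x2 - y2 = -(a11 * a23 / (a11 * a22 + a12 * a21)) * x3 := by
    field_simp
    linarith [key]
  refine ⟨main, ?_, ?_⟩
  · intro hx
    rw [main]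
    have : 0 < a11 * a23 / (a11 * a22 + a12 * a21) := by positivity
    nlinarith
  · intro hx
    have := main
    rw [hx] at this
    linarith [this]
end

section
/- Viewing the equilibrium plant density x_1^{(3)} as a function of the predator's stochastic death rate ã_{30} ∈ ℝ (all other coefficients being held fixed), x_1^{(3)} is strictly decreasing in ã_{30}: if ã_{30} < ã'_{30}, then the corresponding solutions satisfy x_1^{(3)}(ã_{30}) > x_1^{(3)}(ã'_{30}). -/
/-- Viewing the equilibrium plant density `x_1^{(3)}` as a function of the
predator's stochastic death rate `ã_{30} ∈ ℝ` (all other coefficients held fixed),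
`x_1^{(3)}` is strictly decreasing in `ã_{30}`: if `ã_{30} < ã'_{30}`, then the
corresponding solutions of `(S_3)` satisfy `x_1^{(3)}(ã_{30}) > x_1^{(3)}(ã'_{30})`. -/
theorem stmt14 (a11 a22 a33 a21 a32 a12 a23 : ℝ)
    (h11 : 0 < a11) (h22 : 0 < a22) (h33 : 0 < a33)
    (h21 : 0 < a21) (h32 : 0 < a32) (h12 : 0 < a12) (h23 : 0 < a23)
    (ta10 ta20 : ℝ)
    (ta30 ta30' : ℝ) (h3 : ta30 < ta30')
    (x1 x2 x3 : ℝ)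
    (hx1 : -a11 * x1 - a12 * x2 = -ta10)
    (hx2 : a21 * x1 - a22 * x2 - a23 * x3 = ta20)
    (hx3 : a32 * x2 - a33 * x3 = ta30)
    (x1' x2' x3' : ℝ)
    (hx1' : -a11 * x1' - a12 * x2' = -ta10)
    (hx2' : a21 * x1' - a22 * x2' - a23 * x3' = ta20)
    (hx3' : a32 * x2' - a33 * x3' = ta30') :
    x1' < x1 := by
  set u := x1 - x1' with hu
  have e1 : a12 * (x2 - x2') = -(a11 * u) := by rw [hu]; linarith
  have e2 : a12 * (a23 * (x3 - x3')) = (a21 * a12 + a22 * a11) * u := by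
    linear_combination a12 * hx2' - a12 * hx2 - a22 * e1
  have e3 : u * (a32 * a23 * a11 + a33 * (a21 * a12 + a22 * a11)) =
      a12 * a23 * (ta30' - ta30) := by
    linear_combination a12 * a23 * hx3' - a12 * a23 * hx3 + a32 * a23 * e1 - a33 * e2
  have hC : 0 < a32 * a23 * a11 + a33 * (a21 * a12 + a22 * a11) := by positivity
  have hR : 0 < a12 * a23 * (ta30' - ta30) := by
    have : 0 < ta30' - ta30 := by linarith
    positivity
  have hu' : 0 < u := by
    by_contra h
    push_neg at h
    nlinarith [mul_nonneg (neg_nonneg.mpr h) hC.le, e3, hR]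
  linarith [hu']
end

section
/- (Lemma: the support of a boundary equilibrium measure has no gaps.) Let μ be a Borel probability measure on [0,∞)^n with finite first moments, and let I ⊆ {1,…,n} be a nonempty set such that μ-almost every x = (x_1,…,x_n) satisfies x_i > 0 for all i ∈ I and x_i = 0 for all i ∉ I. If λ_i(μ) = 0 for every i ∈ I, then I = {1, 2, …, l} where l is the cardinality of I. -/
open MeasureTheory

/-- The `i`-th Lyapunov exponent `λ_i(μ)` of a (probability) measure `μ` on the
state space: `λ_1(μ) = ∫ (ã_{10} − a_{11}x_1 − a_{12}x_2) dμ`,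
`λ_i(μ) = ∫ (−ã_{i0} + a_{i,i−1}x_{i−1} − a_{ii}x_i − a_{i,i+1}x_{i+1}) dμ` for
`2 ≤ i ≤ n−1`, and `λ_n(μ) = ∫ (−ã_{n0} + a_{n,n−1}x_{n−1} − a_{nn}x_n) dμ`. -/
noncomputable def lam (n : ℕ) (a : ℕ → ℕ → ℝ) (ta : ℕ → ℝ)
    (μ : Measure (ℕ → ℝ)) (i : ℕ) : ℝ :=
  if i = 1 then ∫ x, (ta 1 - a 1 1 * x 1 - a 1 2 * x 2) ∂μ
  else if i = n then ∫ x, (-ta n + a n (n - 1) * x (n - 1) - a n n * x n) ∂μ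
  else ∫ x, (-ta i + a i (i - 1) * x (i - 1) - a i i * x i - a i (i + 1) * x (i + 1)) ∂μ

/-- (Lemma: the support of a boundary equilibrium measure has no gaps.)
Let `μ` be a Borel probability measure on `[0,∞)^n` with finite first moments and
let `I ⊆ {1,…,n}` be a nonempty set such that `μ`-a.e. `x` satisfies `x_i > 0` for
`i ∈ I` and `x_i = 0` for `i ∉ I`.  If `λ_i(μ) = 0` for every `i ∈ I`, then
`I = {1, 2, …, l}` where `l` is the cardinality of `I`. -/
theorem stmt15 (n : ℕ) (hn : 2 ≤ n) (a : ℕ → ℕ → ℝ) (ta : ℕ → ℝ)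
    (ha_diag : ∀ i, 1 ≤ i → i ≤ n → 0 < a i i)
    (ha_sub : ∀ i, 2 ≤ i → i ≤ n → 0 < a i (i - 1))
    (ha_sup : ∀ i, 1 ≤ i → i ≤ n - 1 → 0 < a i (i + 1))
    (hta : ∀ i, 2 ≤ i → i ≤ n → 0 < ta i)
    (μ : Measure (ℕ → ℝ)) [IsProbabilityMeasure μ]
    (hint : ∀ i, 1 ≤ i → i ≤ n → Integrable (fun x : ℕ → ℝ => x i) μ)
    (I : Finset ℕ) (hIne : I.Nonempty) (hIsub : I ⊆ Finset.Icc 1 n)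
    (hsupp : ∀ᵐ x ∂μ, ∀ i, 1 ≤ i → i ≤ n →
      (i ∈ I → 0 < x i) ∧ (i ∉ I → x i = 0))
    (hlam : ∀ i ∈ I, lam n a ta μ i = 0) :
    I = Finset.Icc 1 I.card := by
  have hnonneg : ∀ j, 1 ≤ j → j ≤ n → 0 ≤ ∫ x, x j ∂μ := by
    intro j h1 h2
    refine integral_nonneg_of_ae ?_
    filter_upwards [hsupp] with x hx
    by_cases h : j ∈ I
    · exact ((hx j h1 h2).1 h).le
    · exact le_of_eq ((hx j h1 h2).2 h).symm
  have hzero : ∀ j, 1 ≤ j → j ≤ n → j ∉ I → ∫ x, x j ∂μ = 0 := by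
    intro j h1 h2 hj
    refine integral_eq_zero_of_ae ?_
    filter_upwards [hsupp] with x hx
    exact (hx j h1 h2).2 hj
  have hdown : ∀ i ∈ I, 2 ≤ i → i - 1 ∈ I := by
    intro i hi h2
    obtain ⟨h1, hin⟩ := Finset.mem_Icc.mp (hIsub hi)
    by_contra hnot
    have hzm : ∫ x, x (i - 1) ∂μ = 0 := hzero (i - 1) (by omega) (by omega) hnot
    have hl := hlam i hi
    unfold lam at hl
    rw [if_neg (by omega)] at hl
    have hf1 : Integrable (fun x : ℕ → ℝ => -ta i + a i (i - 1) * x (i - 1)) μ :=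
      (integrable_const _).add ((hint (i - 1) (by omega) (by omega)).const_mul _)
    have hfi : Integrable (fun x : ℕ → ℝ => a i i * x i) μ :=
      (hint i (by omega) (by omega)).const_mul _
    by_cases hineq : i = n
    · subst hineq
      rw [if_pos rfl] at hl
      rw [integral_sub hf1 hfi,
        integral_add (integrable_const _)
          ((hint (i - 1) (by omega) (by omega)).const_mul _),
        integral_const_mul _ _, integral_const_mul _ _, hzm] at hl
      simp at hl
      have hA := hnonneg i (by omega) (by omega)
      have hB := hta i (by omega) (by omega)
      have hC := ha_diag i (by omega) (by omega)
      nlinarith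
    · rw [if_neg hineq] at hl
      have hf2 : Integrable
          (fun x : ℕ → ℝ => -ta i + a i (i - 1) * x (i - 1) - a i i * x i) μ :=
        hf1.sub hfi
      have hf3 : Integrable (fun x : ℕ → ℝ => a i (i + 1) * x (i + 1)) μ :=
        (hint (i + 1) (by omega) (by omega)).const_mul _
      rw [integral_sub hf2 hf3, integral_sub hf1 hfi,
        integral_add (integrable_const _)
          ((hint (i - 1) (by omega) (by omega)).const_mul _),
        integral_const_mul _ _, integral_const_mul _ _, integral_const_mul _ _, hzm] at hl
      simp at hl
      have hA := hnonneg i (by omega) (by omega)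
      have hA' := hnonneg (i + 1) (by omega) (by omega)
      have hB := hta i (by omega) (by omega)
      have hC := ha_diag i (by omega) (by omega)
      have hD := ha_sup i (by omega) (by omega)
      nlinarith
  have hMI : I.max' hIne ∈ I := I.max'_mem hIne
  set M := I.max' hIne with hM
  have hMn : M ≤ n := (Finset.mem_Icc.mp (hIsub hMI)).2
  have hM1 : 1 ≤ M := (Finset.mem_Icc.mp (hIsub hMI)).1
  have hseg : ∀ d j, j ∈ I → 1 ≤ j - d → j - d ∈ I := by
    intro d
    induction d with
    | zero => intro j hj _; simpa using hj
    | succ d ih =>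
      intro j hj h
      have hmem := hdown (j - d) (ih j hj (by omega)) (by omega)
      rwa [show j - d - 1 = j - (d + 1) by omega] at hmem
  have hIeq : I = Finset.Icc 1 M := by
    ext j
    simp only [Finset.mem_Icc]
    constructor
    · intro hj
      exact ⟨(Finset.mem_Icc.mp (hIsub hj)).1, Finset.le_max' I j hj⟩
    · rintro ⟨hj1, hj2⟩
      have := hseg (M - j) M hMI (by omega)
      rwa [show M - (M - j) = j by omega] at this
  have hcard : I.card = M := by rw [hIeq, Nat.card_Icc]; omega
  rw [hcard]
  exact hIeq
end

section
/- (Lemma, second claim.) If I_n ≤ 0, then there is no Borel probability measure μ on [0,∞)^n with finite first moments such that μ-almost every x has all coordinates strictly positive and λ_i(μ) = 0 for every i = 1,…,n. Equivalently, the existence of such a measure μ implies I_n > 0. -/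
open MeasureTheory

lemma integral_lin3 (μ : Measure (ℕ → ℝ)) [IsProbabilityMeasure μ]
    (c b1 b2 b3 : ℝ) (i1 i2 i3 : ℕ)
    (h1 : Integrable (fun x : ℕ → ℝ => x i1) μ)
    (h2 : Integrable (fun x : ℕ → ℝ => x i2) μ)
    (h3 : Integrable (fun x : ℕ → ℝ => x i3) μ) :
    ∫ x, (c + b1 * x i1 + b2 * x i2 + b3 * x i3) ∂μ
      = c + b1 * ∫ x, x i1 ∂μ + b2 * ∫ x, x i2 ∂μ + b3 * ∫ x, x i3 ∂μ := by
  have H1 := h1.const_mul b1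
  have H2 := h2.const_mul b2
  have H3 := h3.const_mul b3
  have I1 : Integrable (fun x : ℕ → ℝ => c + b1 * x i1) μ := (integrable_const c).add H1
  have I2 : Integrable (fun x : ℕ → ℝ => c + b1 * x i1 + b2 * x i2) μ := I1.add H2
  rw [integral_add I2 H3, integral_add I1 H2, integral_add (integrable_const c) H1,
    integral_const_mul, integral_const_mul, integral_const_mul, integral_const]
  simp

lemma integral_coord_pos {α : Type*} [MeasurableSpace α] (μ : Measure α)
    [IsProbabilityMeasure μ] (f : α → ℝ) (hf : Integrable f μ)
    (hpos : ∀ᵐ x ∂μ, 0 < f x) : 0 < ∫ x, f x ∂μ := by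
  have hnn : 0 ≤ᵐ[μ] f := hpos.mono fun x h => h.le
  rcases (integral_nonneg_of_ae hnn).lt_or_eq with h | h
  · exact h
  · exfalso
    have hz : f =ᵐ[μ] 0 := (integral_eq_zero_iff_of_nonneg_ae hnn hf).mp h.symm
    haveI : (ae μ).NeBot := ae_neBot.mpr (IsProbabilityMeasure.ne_zero μ)
    obtain ⟨y, hy1, hy2⟩ := (hpos.and hz).exists
    simp only [Pi.zero_apply] at hy2
    linarith

/-- Sign-propagation for the difference of the two tridiagonal solutions. -/
lemma chain (n : ℕ) (hn : 3 ≤ n) (a : ℕ → ℕ → ℝ) (d : ℕ → ℝ)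
    (hdiag : ∀ i, 1 ≤ i → i ≤ n - 1 → 0 < a i i)
    (hsub : ∀ i, 2 ≤ i → i ≤ n - 1 → 0 < a i (i - 1))
    (hsup : ∀ i, 1 ≤ i → i ≤ n - 2 → 0 < a i (i + 1))
    (hE : ∀ i, 2 ≤ i → i ≤ n - 2 →
      a i (i - 1) * d (i - 1) - a i i * d i - a i (i + 1) * d (i + 1) = 0)
    (hlast : a (n - 1) (n - 2) * d (n - 2) - a (n - 1) (n - 1) * d (n - 1) < 0)
    (hdn : d (n - 1) ≤ 0) :
    d 1 < 0 ∧ d 2 ≤ 0 := by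
  have key : ∀ t k, 1 ≤ k → k + t = n - 2 → d k < 0 ∧ d (k + 1) ≤ 0 := by
    intro t
    induction t with
    | zero =>
      intro k hk1 hk
      have hk2 : k = n - 2 := by omega
      subst hk2
      have e1 : n - 2 + 1 = n - 1 := by omega
      rw [e1]
      refine ⟨?_, hdn⟩
      have hA : 0 < a (n - 1) (n - 2) := by
        have := hsub (n - 1) (by omega) (by omega)
        have e2 : n - 1 - 1 = n - 2 := by omega
        rwa [e2] at this
      have hB : 0 < a (n - 1) (n - 1) := hdiag (n - 1) (by omega) (by omega)
      nlinarith [mul_nonneg hB.le (neg_nonneg.mpr hdn)]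
    | succ t ih =>
      intro k hk1 hk
      obtain ⟨h1, h2⟩ := ih (k + 1) (by omega) (by omega)
      have hEk := hE (k + 1) (by omega) (by omega)
      have e : k + 1 - 1 = k := by omega
      rw [e] at hEk
      have hA : 0 < a (k + 1) k := by
        have := hsub (k + 1) (by omega) (by omega)
        rwa [e] at this
      have hB : 0 < a (k + 1) (k + 1) := hdiag (k + 1) (by omega) (by omega)
      have hC : 0 < a (k + 1) (k + 1 + 1) := hsup (k + 1) (by omega) (by omega)
      constructor
      · nlinarith [mul_pos hB (neg_pos.mpr h1), mul_nonneg hC.le (neg_nonneg.mpr h2)]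
      · exact h1.le
  obtain ⟨h1, h2⟩ := key (n - 3) 1 le_rfl (by omega)
  exact ⟨h1, h2⟩

/-- (Lemma, second claim.)  If `I_n ≤ 0` (where `I_n = −ã_{n0} + a_{n,n−1} x_{n−1}^{(n−1)}`
and `x^{(n−1)}` is the unique solution of `(S_{n−1})`), then there is no Borel
probability measure `μ` on `[0,∞)^n` with finite first moments such that `μ`-a.e.
`x` has all coordinates strictly positive and `λ_i(μ) = 0` for every `i = 1,…,n`. -/
theorem stmt17 (n : ℕ) (hn : 2 ≤ n) (a : ℕ → ℕ → ℝ) (ta : ℕ → ℝ)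
    (ha_diag : ∀ i, 1 ≤ i → i ≤ n → 0 < a i i)
    (ha_sub : ∀ i, 2 ≤ i → i ≤ n → 0 < a i (i - 1))
    (ha_sup : ∀ i, 1 ≤ i → i ≤ n - 1 → 0 < a i (i + 1))
    (hta : ∀ i, 2 ≤ i → i ≤ n → 0 < ta i)
    (x : ℕ → ℝ) (hx : IsSolS a ta (n - 1) x)
    (In : ℝ) (hIn : In = -ta n + a n (n - 1) * x (n - 1))
    (hle : In ≤ 0) :
    ¬ ∃ μ : Measure (ℕ → ℝ), IsProbabilityMeasure μ ∧
      (∀ i, 1 ≤ i → i ≤ n → Integrable (fun x : ℕ → ℝ => x i) μ) ∧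
      (∀ᵐ x ∂μ, ∀ i, 1 ≤ i → i ≤ n → 0 < x i) ∧
      (∀ i, 1 ≤ i → i ≤ n → lam n a ta μ i = 0) := by
  rintro ⟨μ, hprob, hint, hpos, hlam⟩
  haveI := hprob
  -- positivity of moments
  have hm : ∀ i, 1 ≤ i → i ≤ n → 0 < ∫ y, y i ∂μ := by
    intro i h1 h2
    exact integral_coord_pos μ _ (hint i h1 h2)
      (hpos.mono fun y hy => hy i h1 h2)
  -- equation from λ₁ = 0
  have hM1 : ta 1 - a 1 1 * ∫ y, y 1 ∂μ - a 1 2 * ∫ y, y 2 ∂μ = 0 := by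
    have h := hlam 1 le_rfl (by omega)
    unfold lam at h
    rw [if_pos rfl] at h
    rw [show (fun x : ℕ → ℝ => ta 1 - a 1 1 * x 1 - a 1 2 * x 2)
        = (fun x : ℕ → ℝ => ta 1 + -(a 1 1) * x 1 + -(a 1 2) * x 2 + 0 * x 1)
        from funext fun x => by ring] at h
    rw [integral_lin3 μ (ta 1) (-(a 1 1)) (-(a 1 2)) 0 1 2 1
      (hint 1 le_rfl (by omega)) (hint 2 (by omega) (by omega))
      (hint 1 le_rfl (by omega))] at h
    linarith
  -- equation from λ_n = 0
  have hMn : -ta n + a n (n - 1) * ∫ y, y (n - 1) ∂μ - a n n * ∫ y, y n ∂μ = 0 := by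
    have h := hlam n (by omega) le_rfl
    unfold lam at h
    rw [if_neg (by omega : ¬ n = 1), if_pos rfl] at h
    rw [show (fun x : ℕ → ℝ => -ta n + a n (n - 1) * x (n - 1) - a n n * x n)
        = (fun x : ℕ → ℝ => -ta n + a n (n - 1) * x (n - 1) + -(a n n) * x n + 0 * x n)
        from funext fun x => by ring] at h
    rw [integral_lin3 μ (-ta n) (a n (n - 1)) (-(a n n)) 0 (n - 1) n n
      (hint (n - 1) (by omega) (by omega)) (hint n (by omega) le_rfl)
      (hint n (by omega) le_rfl)] at h
    linarith
  -- equations from λ_i = 0 for 2 ≤ i ≤ n-1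
  have hMi : ∀ i, 2 ≤ i → i ≤ n - 1 →
      -ta i + a i (i - 1) * ∫ y, y (i - 1) ∂μ - a i i * ∫ y, y i ∂μ
        - a i (i + 1) * ∫ y, y (i + 1) ∂μ = 0 := by
    intro i h1 h2
    have h := hlam i (by omega) (by omega)
    unfold lam at h
    rw [if_neg (by omega : ¬ i = 1), if_neg (by omega : ¬ i = n)] at h
    rw [show (fun x : ℕ → ℝ =>
          -ta i + a i (i - 1) * x (i - 1) - a i i * x i - a i (i + 1) * x (i + 1))
        = (fun x : ℕ → ℝ =>
          -ta i + a i (i - 1) * x (i - 1) + -(a i i) * x i + -(a i (i + 1)) * x (i + 1))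
        from funext fun x => by ring] at h
    rw [integral_lin3 μ (-ta i) (a i (i - 1)) (-(a i i)) (-(a i (i + 1))) (i - 1) i (i + 1)
      (hint (i - 1) (by omega) (by omega)) (hint i (by omega) (by omega))
      (hint (i + 1) (by omega) (by omega))] at h
    linarith
  -- x (n-1) < m (n-1)
  have hdn : x (n - 1) - (∫ y, y (n - 1) ∂μ) < 0 := by
    have hA : 0 < a n (n - 1) := ha_sub n hn le_rfl
    have hB : 0 < a n n := ha_diag n (by omega) le_rfl
    have hmn := hm n (by omega) le_rfl
    nlinarith [mul_pos hB hmn]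
  rcases Nat.lt_or_ge n 3 with h2 | h3
  · -- case n = 2
    have hn2 : n = 2 := by omega
    subst hn2
    have hx1 := hx 1 le_rfl le_rfl
    rw [if_neg (by omega : ¬ 2 ≤ 1), if_neg (by omega : ¬ 1 < 2 - 1), if_pos rfl] at hx1
    -- hx1 : 0 - a 1 1 * x 1 - 0 = -ta 1
    have ha11 : 0 < a 1 1 := ha_diag 1 le_rfl (by omega)
    have ha12 : 0 < a 1 2 := ha_sup 1 le_rfl le_rfl
    have hm2 := hm 2 (by omega) le_rfl
    -- from hM1 : m1 < x1 ; from hdn : x1 < m1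
    have hx1' : a 1 1 * x 1 = ta 1 := by linarith
    have : a 1 1 * (x 1 - ∫ y, y 1 ∂μ) < 0 := by nlinarith
    nlinarith [mul_pos ha12 hm2]
  · -- case n ≥ 3
    have hx1 := hx 1 le_rfl (by omega)
    rw [if_neg (by omega : ¬ 2 ≤ 1), if_pos (by omega : 1 < n - 1), if_pos rfl] at hx1
    have hxl := hx (n - 1) (by omega) le_rfl
    rw [if_pos (by omega : 2 ≤ n - 1), if_neg (lt_irrefl (n - 1)),
      if_neg (by omega : ¬ n - 1 = 1)] at hxl
    have e1 : n - 1 - 1 = n - 2 := by omega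
    rw [e1] at hxl
    -- hxl : a (n-1) (n-2) * x (n-2) - a (n-1) (n-1) * x (n-1) - 0 = ta (n-1)
    have hMl := hMi (n - 1) (by omega) le_rfl
    rw [e1, (by omega : n - 1 + 1 = n)] at hMl
    obtain ⟨hd1, hd2⟩ := chain n h3 a (fun i => x i - ∫ y, y i ∂μ)
      (fun i hi1 hi2 => ha_diag i hi1 (by omega))
      (fun i hi1 hi2 => ha_sub i hi1 (by omega))
      (fun i hi1 hi2 => ha_sup i hi1 (by omega))
      (fun i hi1 hi2 => by
        have hxi := hx i (by omega) (by omega)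
        rw [if_pos hi1, if_pos (by omega : i < n - 1), if_neg (by omega : ¬ i = 1)] at hxi
        have hMii := hMi i hi1 (by omega)
        show a i (i - 1) * (x (i - 1) - ∫ y, y (i - 1) ∂μ)
            - a i i * (x i - ∫ y, y i ∂μ)
            - a i (i + 1) * (x (i + 1) - ∫ y, y (i + 1) ∂μ) = 0
        ring_nf
        ring_nf at hxi hMii
        linarith)
      (by
        show a (n - 1) (n - 2) * (x (n - 2) - ∫ y, y (n - 2) ∂μ)
            - a (n - 1) (n - 1) * (x (n - 1) - ∫ y, y (n - 1) ∂μ) < 0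
        have hsup' : 0 < a (n - 1) n := by
          have := ha_sup (n - 1) (by omega) (by omega)
          rwa [(by omega : n - 1 + 1 = n)] at this
        have hmn := hm n (by omega) le_rfl
        nlinarith [mul_pos hsup' hmn])
      hdn.le
    have ha11 : 0 < a 1 1 := ha_diag 1 le_rfl (by omega)
    have ha12 : 0 < a 1 2 := ha_sup 1 le_rfl (by omega)
    nlinarith [mul_pos ha11 (neg_pos.mpr hd1), mul_nonneg ha12.le (neg_nonneg.mpr hd2)]
end

section
/- (Last row of the inverse of a constant-coefficient tridiagonal matrix.) Let α, β > 0 and n ≥ 1, and let r_1 ≠ r_2 be the two (real, distinct) roots of the quadratic equation β − rα − r²β = 0, namely r_{1,2} = (−α ± √(α² + 4β²))/(2β). Let A be the n×n tridiagonal matrix with all diagonal entries equal to −α, all superdiagonal entries equal to −β, and all subdiagonal entries equal to β. Then A is invertible and the entries of the last row of A^{−1} are given by (A^{−1})_{nj} = (r_1^{−j} − r_2^{−j})(r_1^{n+1} r_2^{n} − r_2^{n+1} r_1^{n}) / ( −β (r_1 − r_2)(r_1^{n+1} − r_2^{n+1}) ) for every 1 ≤ j ≤ n (all the powers and the denominator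 being well defined and nonzero). -/
lemma sum_ite_nat {n : ℕ} (f : Fin n → ℝ) (m : ℕ) :
    (∑ l : Fin n, if (l : ℕ) = m then f l else 0) = if h : m < n then f ⟨m, h⟩ else 0 := by
  by_cases h : m < n
  · rw [dif_pos h]
    rw [show (∑ l : Fin n, if (l : ℕ) = m then f l else 0)
        = ∑ l : Fin n, if l = ⟨m, h⟩ then f l else 0 from
      Finset.sum_congr rfl (fun l _ => by simp [Fin.ext_iff])]
    simp
  · rw [dif_neg h]
    apply Finset.sum_eq_zero
    intro l _
    rw [if_neg]
    have := l.isLt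
    omega

lemma rowsum {n : ℕ} (α β : ℝ) (i : Fin n) (f : Fin n → ℝ) :
    (∑ l : Fin n, (if (i : ℕ) = (l : ℕ) then -α
      else if (l : ℕ) = (i : ℕ) + 1 then -β
      else if (i : ℕ) = (l : ℕ) + 1 then β else 0) * f l) =
    -α * f i + (if h : (i:ℕ)+1 < n then -β * f ⟨(i:ℕ)+1, h⟩ else 0)
      + (if 0 < (i:ℕ) then β * f ⟨(i:ℕ)-1, Nat.lt_of_le_of_lt (Nat.sub_le _ _) i.isLt⟩ else 0) := by
  by_cases h0 : 0 < (i:ℕ)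
  · have step : ∀ l : Fin n, (if (i : ℕ) = (l : ℕ) then -α
        else if (l : ℕ) = (i : ℕ) + 1 then -β
        else if (i : ℕ) = (l : ℕ) + 1 then β else 0) * f l =
        (if (l:ℕ) = (i:ℕ) then -α * f l else 0) +
        ((if (l:ℕ) = (i:ℕ)+1 then -β * f l else 0) +
        (if (l:ℕ) = (i:ℕ)-1 then β * f l else 0)) := by
      intro l
      split_ifs <;> first | ring1 | (exfalso; omega)
    rw [Finset.sum_congr rfl (fun l _ => step l), Finset.sum_add_distrib,
      Finset.sum_add_distrib, sum_ite_nat, sum_ite_nat, sum_ite_nat]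
    rw [dif_pos i.isLt, if_pos h0,
      dif_pos (show (i:ℕ)-1 < n from Nat.lt_of_le_of_lt (Nat.sub_le _ _) i.isLt)]
    simp only [Fin.eta]
    ring
  · have step : ∀ l : Fin n, (if (i : ℕ) = (l : ℕ) then -α
        else if (l : ℕ) = (i : ℕ) + 1 then -β
        else if (i : ℕ) = (l : ℕ) + 1 then β else 0) * f l =
        (if (l:ℕ) = (i:ℕ) then -α * f l else 0) +
        (if (l:ℕ) = (i:ℕ)+1 then -β * f l else 0) := by
      intro l
      split_ifs <;> first | ring1 | (exfalso; omega)
    rw [Finset.sum_congr rfl (fun l _ => step l), Finset.sum_add_distrib,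
      sum_ite_nat, sum_ite_nat]
    rw [dif_pos i.isLt, if_neg h0, add_zero]
/-- (Last row of the inverse of a constant-coefficient tridiagonal matrix.)
Let `α, β > 0`, `n ≥ 1`, and let `r_1 ≠ r_2` be the two (real, distinct) roots of
`β − rα − r²β = 0`, namely `r_{1,2} = (−α ± √(α² + 4β²))/(2β)`.  Let `A` be the
`n×n` tridiagonal matrix with diagonal entries `−α`, superdiagonal entries `−β`
and subdiagonal entries `β`.  Then `A` is invertible and
`(A⁻¹)_{nj} = (r_1^{−j} − r_2^{−j})(r_1^{n+1} r_2^n − r_2^{n+1} r_1^n) /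
(−β (r_1 − r_2)(r_1^{n+1} − r_2^{n+1}))` for every `1 ≤ j ≤ n`
(all the powers and the denominator being well defined and nonzero). -/
theorem stmt18 (n : ℕ) (hn : 1 ≤ n) (α β : ℝ) (hα : 0 < α) (hβ : 0 < β)
    (r1 r2 : ℝ)
    (hr1 : r1 = (-α + Real.sqrt (α ^ 2 + 4 * β ^ 2)) / (2 * β))
    (hr2 : r2 = (-α - Real.sqrt (α ^ 2 + 4 * β ^ 2)) / (2 * β))
    (A : Matrix (Fin n) (Fin n) ℝ)
    (hA : A = Matrix.of fun i k : Fin n =>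
      if (i : ℕ) = (k : ℕ) then -α
      else if (k : ℕ) = (i : ℕ) + 1 then -β
      else if (i : ℕ) = (k : ℕ) + 1 then β
      else 0) :
    (β - r1 * α - r1 ^ 2 * β = 0) ∧
    (β - r2 * α - r2 ^ 2 * β = 0) ∧
    r1 ≠ r2 ∧ r1 ≠ 0 ∧ r2 ≠ 0 ∧
    IsUnit A ∧
    (-β * (r1 - r2) * (r1 ^ (n + 1) - r2 ^ (n + 1)) ≠ 0) ∧
    ∀ j : Fin n, A⁻¹ ⟨n - 1, by omega⟩ j =
      ((r1 ^ (-(((j : ℕ) + 1 : ℕ) : ℤ)) - r2 ^ (-(((j : ℕ) + 1 : ℕ) : ℤ))) *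
        (r1 ^ (n + 1) * r2 ^ n - r2 ^ (n + 1) * r1 ^ n)) /
      (-β * (r1 - r2) * (r1 ^ (n + 1) - r2 ^ (n + 1))) := by
  have hs : Real.sqrt (α ^ 2 + 4 * β ^ 2) ^ 2 = α ^ 2 + 4 * β ^ 2 :=
    Real.sq_sqrt (by positivity)
  have hs0 : 0 ≤ Real.sqrt (α ^ 2 + 4 * β ^ 2) := Real.sqrt_nonneg _
  have hb : (0:ℝ) < 2*β := by positivity
  have hq1 : β - r1 * α - r1 ^ 2 * β = 0 := by
    rw [hr1]; field_simp; nlinarith [hs, Real.sq_sqrt (show (0:ℝ) ≤ α ^ 2 + β ^ 2 * 4 by positivity)]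
  have hq2 : β - r2 * α - r2 ^ 2 * β = 0 := by
    rw [hr2]; field_simp; nlinarith [hs, Real.sq_sqrt (show (0:ℝ) ≤ α ^ 2 + β ^ 2 * 4 by positivity)]
  have hgt : α < Real.sqrt (α ^ 2 + 4 * β ^ 2) := by nlinarith [hs, hs0]
  have hlt : Real.sqrt (α ^ 2 + 4 * β ^ 2) < α + 2*β := by nlinarith [hs, hs0]
  have hge : 2*β < α + Real.sqrt (α ^ 2 + 4 * β ^ 2) := by nlinarith [hs, hs0]
  have hprod : r1 * r2 = -1 := by rw [hr1, hr2]; field_simp; nlinarith [hs]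
  have h1pos : 0 < r1 := by rw [hr1]; exact div_pos (by linarith) hb
  have h1lt : r1 < 1 := by rw [hr1, div_lt_one hb]; linarith
  have h2lt : r2 < -1 := by rw [hr2, div_lt_iff₀ hb]; linarith
  have hr1ne0 : r1 ≠ 0 := ne_of_gt h1pos
  have hr2ne0 : r2 ≠ 0 := ne_of_lt (by linarith)
  have hrne : r1 ≠ r2 := by intro h; rw [h] at h1pos; linarith
  have hD : r1 ^ (n+1) - r2 ^ (n+1) ≠ 0 := by
    intro h
    have he : r1 ^ (n+1) = r2 ^ (n+1) := by linarith
    have he2 : |r1| ^ (n+1) = |r2| ^ (n+1) := by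
      rw [← abs_pow, ← abs_pow, he]
    have ha : |r1| ^ (n+1) < 1 :=
      pow_lt_one₀ (abs_nonneg _) (by rw [abs_of_pos h1pos]; exact h1lt) (by omega)
    have hb2 : 1 < |r2| ^ (n+1) :=
      one_lt_pow₀ (by rw [abs_of_neg (by linarith : r2 < 0)]; linarith) (by omega)
    linarith
  have hpow : ∀ m : ℕ, r1 ^ m * r2 ^ m = (-1:ℝ) ^ m := fun m => by
    rw [← mul_pow, hprod]
  have hden : -β * (r1 - r2) * (r1 ^ (n+1) - r2 ^ (n+1)) ≠ 0 :=
    mul_ne_zero (mul_ne_zero (by simpa using ne_of_gt hβ) (sub_ne_zero.mpr hrne)) hD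
  have hc : ∀ k : Fin n, β * (-1:ℝ) ^ ((k:ℕ)+1) * (r2 - r1) * (r1 ^ (n+1) - r2 ^ (n+1)) ≠ 0 := by
    intro k
    exact mul_ne_zero (mul_ne_zero (mul_ne_zero (ne_of_gt hβ)
      (pow_ne_zero _ (by norm_num))) (sub_ne_zero.mpr (Ne.symm hrne))) hD
  set B : Matrix (Fin n) (Fin n) ℝ := Matrix.of (fun i k : Fin n =>
    (r1 ^ (min (i:ℕ) (k:ℕ) + 1) - r2 ^ (min (i:ℕ) (k:ℕ) + 1)) *
    (r1 ^ (max (i:ℕ) (k:ℕ) + 1) * r2 ^ (n+1) - r2 ^ (max (i:ℕ) (k:ℕ) + 1) * r1 ^ (n+1)) /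
    (β * (-1) ^ ((k:ℕ)+1) * (r2 - r1) * (r1 ^ (n+1) - r2 ^ (n+1)))) with hB
  have hAB : A * B = 1 := by
    ext i k
    rw [Matrix.mul_apply, hA]
    simp only [Matrix.of_apply]
    rw [rowsum α β i (fun l => B l k), Matrix.one_apply]
    rcases Nat.lt_trichotomy (i:ℕ) (k:ℕ) with hik | hik | hik
    · -- i < k
      have hne : ¬(i = k) := fun h => absurd (congrArg Fin.val h) (by omega)
      rw [if_neg hne]
      have hsucc : (i:ℕ)+1 < n := lt_of_le_of_lt hik k.isLt
      rw [dif_pos hsucc]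
      have hpred : (if 0 < (i:ℕ) then
            β * B ⟨(i:ℕ)-1, Nat.lt_of_le_of_lt (Nat.sub_le _ _) i.isLt⟩ k else 0)
          = β * ((r1 ^ ((i:ℕ)) - r2 ^ ((i:ℕ))) *
            (r1 ^ ((k:ℕ) + 1) * r2 ^ (n+1) - r2 ^ ((k:ℕ) + 1) * r1 ^ (n+1)) /
            (β * (-1) ^ ((k:ℕ)+1) * (r2 - r1) * (r1 ^ (n+1) - r2 ^ (n+1)))) := by
        by_cases h0 : 0 < (i:ℕ)
        · rw [if_pos h0, hB]
          simp only [Matrix.of_apply, Fin.val_mk]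
          rw [min_eq_left (show (i:ℕ)-1 ≤ (k:ℕ) by omega),
            max_eq_right (show (i:ℕ)-1 ≤ (k:ℕ) by omega),
            show (i:ℕ)-1+1 = (i:ℕ) by omega]
        · rw [if_neg h0, show (i:ℕ) = 0 by omega]
          ring
      rw [hpred, hB]
      simp only [Matrix.of_apply, Fin.val_mk]
      rw [min_eq_left (show (i:ℕ) ≤ (k:ℕ) by omega),
        max_eq_right (show (i:ℕ) ≤ (k:ℕ) by omega),
        min_eq_left (show (i:ℕ)+1 ≤ (k:ℕ) by omega),
        max_eq_right (show (i:ℕ)+1 ≤ (k:ℕ) by omega)]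
      have hu : β * (r1 ^ (i:ℕ) - r2 ^ (i:ℕ)) - α * (r1 ^ ((i:ℕ)+1) - r2 ^ ((i:ℕ)+1))
          - β * (r1 ^ ((i:ℕ)+1+1) - r2 ^ ((i:ℕ)+1+1)) = 0 := by
        linear_combination (r1 ^ (i:ℕ)) * hq1 - (r2 ^ (i:ℕ)) * hq2
      rw [← mul_div_assoc, ← mul_div_assoc, ← mul_div_assoc,
        ← add_div, ← add_div, div_eq_zero_iff]
      left
      linear_combination (r1 ^ ((k:ℕ) + 1) * r2 ^ (n+1) - r2 ^ ((k:ℕ) + 1) * r1 ^ (n+1)) * hu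
    · -- i = k
      have hik' : i = k := Fin.ext hik
      subst hik'
      rw [if_pos rfl]
      have hsuccterm : (if h : (i:ℕ)+1 < n then -β * B ⟨(i:ℕ)+1, h⟩ i else 0)
          = -β * ((r1 ^ ((i:ℕ)+1) - r2 ^ ((i:ℕ)+1)) *
            (r1 ^ ((i:ℕ) + 2) * r2 ^ (n+1) - r2 ^ ((i:ℕ) + 2) * r1 ^ (n+1)) /
            (β * (-1) ^ ((i:ℕ)+1) * (r2 - r1) * (r1 ^ (n+1) - r2 ^ (n+1)))) := by
        by_cases h1 : (i:ℕ)+1 < n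
        · rw [dif_pos h1, hB]
          simp only [Matrix.of_apply, Fin.val_mk]
          rw [min_eq_right (show (i:ℕ) ≤ (i:ℕ)+1 by omega),
            max_eq_left (show (i:ℕ) ≤ (i:ℕ)+1 by omega),
            show (i:ℕ)+1+1 = (i:ℕ)+2 by omega]
        · rw [dif_neg h1, show (i:ℕ)+2 = n+1 by omega]
          ring
      have hpredterm : (if 0 < (i:ℕ) then
            β * B ⟨(i:ℕ)-1, Nat.lt_of_le_of_lt (Nat.sub_le _ _) i.isLt⟩ i else 0)
          = β * ((r1 ^ ((i:ℕ)) - r2 ^ ((i:ℕ))) *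
            (r1 ^ ((i:ℕ) + 1) * r2 ^ (n+1) - r2 ^ ((i:ℕ) + 1) * r1 ^ (n+1)) /
            (β * (-1) ^ ((i:ℕ)+1) * (r2 - r1) * (r1 ^ (n+1) - r2 ^ (n+1)))) := by
        by_cases h0 : 0 < (i:ℕ)
        · rw [if_pos h0, hB]
          simp only [Matrix.of_apply, Fin.val_mk]
          rw [min_eq_left (show (i:ℕ)-1 ≤ (i:ℕ) by omega),
            max_eq_right (show (i:ℕ)-1 ≤ (i:ℕ) by omega),
            show (i:ℕ)-1+1 = (i:ℕ) by omega]
        · rw [if_neg h0, show (i:ℕ) = 0 by omega]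
          ring
      rw [hsuccterm, hpredterm, hB]
      simp only [Matrix.of_apply, Fin.val_mk]
      rw [min_self, max_self]
      have hu : β * (r1 ^ (i:ℕ) - r2 ^ (i:ℕ)) - α * (r1 ^ ((i:ℕ)+1) - r2 ^ ((i:ℕ)+1))
          - β * (r1 ^ ((i:ℕ)+2) - r2 ^ ((i:ℕ)+2)) = 0 := by
        linear_combination (r1 ^ (i:ℕ)) * hq1 - (r2 ^ (i:ℕ)) * hq2
      have hp := hpow ((i:ℕ)+1)
      have hcne := hc i
      rw [← mul_div_assoc, ← mul_div_assoc, ← mul_div_assoc,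
        ← add_div, ← add_div, div_eq_one_iff_eq hcne]
      linear_combination (r1 ^ ((i:ℕ)+1) * r2 ^ (n+1) - r2 ^ ((i:ℕ)+1) * r1 ^ (n+1)) * hu
        + β * (r2 - r1) * (r1 ^ (n+1) - r2 ^ (n+1)) * hp
    · -- i > k
      have hne : ¬(i = k) := fun h => absurd (congrArg Fin.val h) (by omega)
      rw [if_neg hne]
      have hpred0 : 0 < (i:ℕ) := by omega
      have hsuccterm : (if h : (i:ℕ)+1 < n then -β * B ⟨(i:ℕ)+1, h⟩ k else 0)
          = -β * ((r1 ^ ((k:ℕ)+1) - r2 ^ ((k:ℕ)+1)) *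
            (r1 ^ ((i:ℕ) + 2) * r2 ^ (n+1) - r2 ^ ((i:ℕ) + 2) * r1 ^ (n+1)) /
            (β * (-1) ^ ((k:ℕ)+1) * (r2 - r1) * (r1 ^ (n+1) - r2 ^ (n+1)))) := by
        by_cases h1 : (i:ℕ)+1 < n
        · rw [dif_pos h1, hB]
          simp only [Matrix.of_apply, Fin.val_mk]
          rw [min_eq_right (show (k:ℕ) ≤ (i:ℕ)+1 by omega),
            max_eq_left (show (k:ℕ) ≤ (i:ℕ)+1 by omega),
            show (i:ℕ)+1+1 = (i:ℕ)+2 by omega]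
        · rw [dif_neg h1, show (i:ℕ)+2 = n+1 by omega]
          ring
      rw [hsuccterm, if_pos hpred0, hB]
      simp only [Matrix.of_apply, Fin.val_mk]
      rw [min_eq_right (show (k:ℕ) ≤ (i:ℕ) by omega),
        max_eq_left (show (k:ℕ) ≤ (i:ℕ) by omega),
        min_eq_right (show (k:ℕ) ≤ (i:ℕ)-1 by omega),
        max_eq_left (show (k:ℕ) ≤ (i:ℕ)-1 by omega),
        show (i:ℕ)-1+1 = (i:ℕ) by omega]
      have hw : β * (r1 ^ (i:ℕ) * r2 ^ (n+1) - r2 ^ (i:ℕ) * r1 ^ (n+1))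
          - α * (r1 ^ ((i:ℕ)+1) * r2 ^ (n+1) - r2 ^ ((i:ℕ)+1) * r1 ^ (n+1))
          - β * (r1 ^ ((i:ℕ)+2) * r2 ^ (n+1) - r2 ^ ((i:ℕ)+2) * r1 ^ (n+1)) = 0 := by
        linear_combination (r1 ^ (i:ℕ) * r2 ^ (n+1)) * hq1 - (r2 ^ (i:ℕ) * r1 ^ (n+1)) * hq2
      rw [← mul_div_assoc, ← mul_div_assoc, ← mul_div_assoc,
        ← add_div, ← add_div, div_eq_zero_iff]
      left
      linear_combination (r1 ^ ((k:ℕ) + 1) - r2 ^ ((k:ℕ) + 1)) * hw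
  have hIsUnit : IsUnit A := by
    rw [Matrix.isUnit_iff_isUnit_det]
    exact Matrix.isUnit_det_of_right_inverse hAB
  have hInv : A⁻¹ = B := Matrix.inv_eq_right_inv hAB
  refine ⟨hq1, hq2, hrne, hr1ne0, hr2ne0, hIsUnit, hden, ?_⟩
  intro j
  have hj := j.isLt
  rw [hInv, hB]
  simp only [Matrix.of_apply, Fin.val_mk]
  rw [min_eq_right (show (j:ℕ) ≤ n-1 by omega),
    max_eq_left (show (j:ℕ) ≤ n-1 by omega),
    show n-1+1 = n by omega]
  rw [zpow_neg, zpow_neg, zpow_natCast, zpow_natCast]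
  have hsq : (-1:ℝ) ^ ((j:ℕ)+1) * (-1) ^ ((j:ℕ)+1) = 1 := by
    rw [← mul_pow]; norm_num
  have hinv1 : (r1 ^ ((j:ℕ)+1))⁻¹ = (-1:ℝ) ^ ((j:ℕ)+1) * r2 ^ ((j:ℕ)+1) := by
    apply inv_eq_of_mul_eq_one_right
    calc r1 ^ ((j:ℕ)+1) * ((-1:ℝ) ^ ((j:ℕ)+1) * r2 ^ ((j:ℕ)+1))
        = (r1 ^ ((j:ℕ)+1) * r2 ^ ((j:ℕ)+1)) * (-1:ℝ) ^ ((j:ℕ)+1) := by ring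
      _ = (-1:ℝ) ^ ((j:ℕ)+1) * (-1:ℝ) ^ ((j:ℕ)+1) := by rw [hpow]
      _ = 1 := hsq
  have hinv2 : (r2 ^ ((j:ℕ)+1))⁻¹ = (-1:ℝ) ^ ((j:ℕ)+1) * r1 ^ ((j:ℕ)+1) := by
    apply inv_eq_of_mul_eq_one_right
    calc r2 ^ ((j:ℕ)+1) * ((-1:ℝ) ^ ((j:ℕ)+1) * r1 ^ ((j:ℕ)+1))
        = (r1 ^ ((j:ℕ)+1) * r2 ^ ((j:ℕ)+1)) * (-1:ℝ) ^ ((j:ℕ)+1) := by ring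
      _ = (-1:ℝ) ^ ((j:ℕ)+1) * (-1:ℝ) ^ ((j:ℕ)+1) := by rw [hpow]
      _ = 1 := hsq
  rw [hinv1, hinv2, div_eq_div_iff (hc j) hden]
  linear_combination (-((r2 ^ ((j:ℕ)+1) - r1 ^ ((j:ℕ)+1)) *
    (r1 ^ (n+1) * r2 ^ n - r2 ^ (n+1) * r1 ^ n) * β * (r2 - r1) *
    (r1 ^ (n+1) - r2 ^ (n+1)))) * hsq
end

section
/- (Dissipativity estimate ensuring tightness.) Define f_1(x) := a_{10} − a_{11}x_1 − a_{12}x_2, f_i(x) := −a_{i0} + a_{i,i−1}x_{i−1} − a_{ii}x_i − a_{i,i+1}x_{i+1} for 2 ≤ i ≤ n−1, and f_n(x) := −a_{n0} + a_{n,n−1}x_{n−1} − a_{nn}x_n, for x ∈ [0,∞)^n. Let c_1 := 1 and c_i := ∏_{k=2}^{i} a_{k−1,k}/a_{k,k−1} for 2 ≤ i ≤ n. Then there exists γ_b > 0 such that limsup, taken over x ∈ [0,∞)^n as ‖x‖ := max_i |x_i| → ∞, of the quantity [ (∑_{i=1}^n c_i x_i f_i(x)) / (1 + ∑_{i=1}^n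 c_i x_i) − (1/2)(∑_{i,j=1}^n σ_{ij} c_i c_j x_i x_j) / (1 + ∑_{i=1}^n c_i x_i)² + γ_b (1 + ∑_{i=1}^n |f_i(x)|) ] is strictly negative. -/
/-- The drift coefficients of the food chain:
`f_1(x) = a_{10} − a_{11}x_1 − a_{12}x_2`,
`f_i(x) = −a_{i0} + a_{i,i−1}x_{i−1} − a_{ii}x_i − a_{i,i+1}x_{i+1}` for `2 ≤ i ≤ n−1`,
`f_n(x) = −a_{n0} + a_{n,n−1}x_{n−1} − a_{nn}x_n`. -/
def fdrift (n : ℕ) (a : ℕ → ℕ → ℝ) (a0 : ℕ → ℝ) (i : ℕ) (x : ℕ → ℝ) : ℝ :=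
  if i = 1 then a0 1 - a 1 1 * x 1 - a 1 2 * x 2
  else if i = n then -a0 n + a n (n - 1) * x (n - 1) - a n n * x n
  else -a0 i + a i (i - 1) * x (i - 1) - a i i * x i - a i (i + 1) * x (i + 1)

/-- The weights `c_1 = 1`, `c_i = ∏_{k=2}^{i} a_{k−1,k}/a_{k,k−1}` for `i ≥ 2`. -/
noncomputable def ccoef (a : ℕ → ℕ → ℝ) (i : ℕ) : ℝ :=
  if i = 1 then 1 else ∏ k ∈ Finset.Icc 2 i, a (k - 1) k / a k (k - 1)

lemma tel_aux (t : ℕ → ℝ) (n : ℕ) : ∑ i ∈ Finset.Icc 1 n, (t (i-1) - t i) = t 0 - t n := by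
  induction n with
  | zero => simp
  | succ m ih =>
      rw [Finset.sum_Icc_succ_top (by omega), ih]
      simp

lemma ccoef_rec (a : ℕ → ℕ → ℝ) (i : ℕ) (hi : 2 ≤ i) :
    ccoef a i = ccoef a (i-1) * (a (i-1) i / a i (i-1)) := by
  obtain ⟨m, rfl⟩ : ∃ m, i = m + 2 := ⟨i - 2, by omega⟩
  have h1 : m + 2 - 1 = m + 1 := rfl
  rw [h1]
  unfold ccoef
  rw [if_neg (by omega), Finset.prod_Icc_succ_top (by omega)]
  congr 1
  split
  · next h => simp [show m = 0 by omega]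
  · rfl

lemma sum_identity (n : ℕ) (hn : 2 ≤ n) (a : ℕ → ℕ → ℝ) (a0 : ℕ → ℝ)
    (hrel : ∀ i, 2 ≤ i → i ≤ n → ccoef a i * a i (i-1) = ccoef a (i-1) * a (i-1) i)
    (x : ℕ → ℝ) :
    ∑ i ∈ Finset.Icc 1 n, ccoef a i * x i * fdrift n a a0 i x
      = a0 1 * x 1 - (∑ i ∈ Finset.Icc 2 n, ccoef a i * a0 i * x i)
        - ∑ i ∈ Finset.Icc 1 n, ccoef a i * a i i * (x i)^2 := by
  set c := ccoef a with hc_def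
  set t : ℕ → ℝ := fun i => if 1 ≤ i ∧ i + 1 ≤ n then c i * a i (i+1) * x i * x (i+1) else 0
    with ht
  have key : ∀ i ∈ Finset.Icc 1 n, c i * x i * fdrift n a a0 i x
      = ((if i = 1 then a0 1 * x 1 else -(c i * a0 i * x i)) - c i * a i i * (x i)^2)
        + (t (i-1) - t i) := by
    intro i hi
    simp only [Finset.mem_Icc] at hi
    by_cases h1 : i = 1
    · subst h1
      have hc1 : c 1 = 1 := by simp [hc_def, ccoef]
      simp only [fdrift, if_pos rfl, ht]
      norm_num
      rw [if_pos hn, hc1]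
      ring
    · by_cases h2 : i = n
      · subst h2
        have hrec := hrel i hn le_rfl
        simp only [fdrift, if_neg h1, if_pos rfl, ht, ite_true]
        rw [if_pos (show 1 ≤ i - 1 ∧ i - 1 + 1 ≤ i by omega),
          if_neg (show ¬(1 ≤ i ∧ i + 1 ≤ i) by omega)]
        have hnn : i - 1 + 1 = i := by omega
        rw [hnn]
        linear_combination hrec * (x (i-1) * x i)
      · have h2i : 2 ≤ i := by omega
        have hin : i + 1 ≤ n := by omega
        have hrec := hrel i h2i (by omega)
        simp only [fdrift, if_neg h1, if_neg h2, ht]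
        rw [if_pos (by omega : 1 ≤ i - 1 ∧ i - 1 + 1 ≤ n), if_pos (by omega : 1 ≤ i ∧ i + 1 ≤ n)]
        have hii : i - 1 + 1 = i := by omega
        rw [hii]
        linear_combination hrec * (x (i-1) * x i)
  rw [Finset.sum_congr rfl key, Finset.sum_add_distrib, tel_aux, Finset.sum_sub_distrib]
  have h0 : t 0 = 0 := by rw [ht]; norm_num
  have hnn : t n = 0 := by rw [ht]; simp
  have hsplit : Finset.Icc 1 n = insert 1 (Finset.Icc 2 n) := by
    ext k; simp only [Finset.mem_insert, Finset.mem_Icc]; omega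
  rw [h0, hnn, hsplit, Finset.sum_insert (by simp), if_pos rfl]
  rw [Finset.sum_congr rfl (fun i hi => by
    rw [if_neg (by simp only [Finset.mem_Icc] at hi; omega)])]
  rw [← hsplit, Finset.sum_neg_distrib]
  ring

lemma abs4 (p q r s u v w M : ℝ) (hu : |u| ≤ M) (hv : |v| ≤ M) (hw : |w| ≤ M) :
    |p + q*u + r*v + s*w| ≤ (|p|+|q|+|r|+|s|)*(1+M) := by
  have h0 : 0 ≤ M := le_trans (abs_nonneg u) hu
  calc |p + q*u + r*v + s*w| ≤ |p| + |q*u| + |r*v| + |s*w| := by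
        calc |p + q*u + r*v + s*w| ≤ |p + q*u + r*v| + |s*w| := abs_add_le _ _
          _ ≤ |p + q*u| + |r*v| + |s*w| := by linarith [abs_add_le (p+q*u) (r*v)]
          _ ≤ |p| + |q*u| + |r*v| + |s*w| := by linarith [abs_add_le p (q*u)]
    _ ≤ (|p|+|q|+|r|+|s|)*(1+M) := by
        rw [abs_mul, abs_mul, abs_mul]
        nlinarith [abs_nonneg p, abs_nonneg q, abs_nonneg r, abs_nonneg s,
          abs_nonneg u, abs_nonneg v, abs_nonneg w,
          mul_le_mul_of_nonneg_left hu (abs_nonneg q),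
          mul_le_mul_of_nonneg_left hv (abs_nonneg r),
          mul_le_mul_of_nonneg_left hw (abs_nonneg s)]

set_option maxHeartbeats 1000000 in
/-- (Dissipativity estimate ensuring tightness.)  There exists `γ_b > 0` such that
the limsup, over `x ∈ [0,∞)^n` as `‖x‖ = max_i |x_i| → ∞`, of
`(∑ c_i x_i f_i(x))/(1 + ∑ c_i x_i) − (1/2)(∑_{i,j} σ_{ij} c_i c_j x_i x_j)/(1 + ∑ c_i x_i)²
+ γ_b (1 + ∑ |f_i(x)|)` is strictly negative; i.e. there are `γ_b > 0`, `ε > 0` and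
a radius `R` such that the bracket is `≤ −ε` for every `x ∈ [0,∞)^n` with `‖x‖ ≥ R`. -/
theorem stmt19 (n : ℕ) (hn : 2 ≤ n) (a : ℕ → ℕ → ℝ) (a0 : ℕ → ℝ)
    (ha0 : ∀ i, 1 ≤ i → i ≤ n → 0 < a0 i)
    (ha_diag : ∀ i, 1 ≤ i → i ≤ n → 0 < a i i)
    (ha_sub : ∀ i, 2 ≤ i → i ≤ n → 0 < a i (i - 1))
    (ha_sup : ∀ i, 1 ≤ i → i ≤ n - 1 → 0 < a i (i + 1))
    (σ : ℕ → ℕ → ℝ)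
    (hσsymm : ∀ i j, σ i j = σ j i)
    (hσpsd : ∀ v : ℕ → ℝ,
      0 ≤ ∑ i ∈ Finset.Icc 1 n, ∑ j ∈ Finset.Icc 1 n, σ i j * v i * v j) :
    ∃ γb > (0 : ℝ), ∃ ε > (0 : ℝ), ∃ R : ℝ, ∀ x : ℕ → ℝ,
      (∀ i, 1 ≤ i → i ≤ n → 0 ≤ x i) →
      R ≤ (Finset.Icc 1 n).sup' (Finset.nonempty_Icc.mpr (by omega)) (fun i => |x i|) →
      (∑ i ∈ Finset.Icc 1 n, ccoef a i * x i * fdrift n a a0 i x) /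
          (1 + ∑ i ∈ Finset.Icc 1 n, ccoef a i * x i)
        - (1 / 2) * (∑ i ∈ Finset.Icc 1 n, ∑ j ∈ Finset.Icc 1 n,
            σ i j * ccoef a i * ccoef a j * x i * x j) /
          (1 + ∑ i ∈ Finset.Icc 1 n, ccoef a i * x i) ^ 2
        + γb * (1 + ∑ i ∈ Finset.Icc 1 n, |fdrift n a a0 i x|)
      ≤ -ε := by
  classical
  have hne : (Finset.Icc 1 n).Nonempty := Finset.nonempty_Icc.mpr (by omega)
  have hcpos : ∀ i, 1 ≤ i → i ≤ n → 0 < ccoef a i := by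
    intro i h1 h2
    unfold ccoef
    split
    · exact one_pos
    · apply Finset.prod_pos
      intro k hk
      simp only [Finset.mem_Icc] at hk
      have hk1 : k - 1 + 1 = k := by omega
      have h := ha_sup (k-1) (by omega) (by omega)
      rw [hk1] at h
      exact div_pos h (ha_sub k hk.1 (by omega))
  have hrel : ∀ i, 2 ≤ i → i ≤ n → ccoef a i * a i (i-1) = ccoef a (i-1) * a (i-1) i := by
    intro i h2 hin
    have hne0 : a i (i-1) ≠ 0 := ne_of_gt (ha_sub i h2 hin)
    rw [ccoef_rec a i h2]
    field_simp
  set d := (Finset.Icc 1 n).inf' hne (fun i => ccoef a i * a i i) with hd_def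
  have hd : 0 < d := by
    rw [hd_def, Finset.lt_inf'_iff]
    intro i hi
    simp only [Finset.mem_Icc] at hi
    exact mul_pos (hcpos i hi.1 hi.2) (ha_diag i hi.1 hi.2)
  set Cs := ∑ i ∈ Finset.Icc 1 n, ccoef a i with hCs_def
  have hCs : 0 ≤ Cs := Finset.sum_nonneg fun i hi => by
    simp only [Finset.mem_Icc] at hi; exact (hcpos i hi.1 hi.2).le
  set K := 1 + Cs with hK_def
  have hK : 0 < K := by linarith
  set L := ∑ i ∈ Finset.Icc 1 n, (|a0 i| + |a i (i-1)| + |a i i| + |a i (i+1)|) with hL_def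
  have hL : 0 ≤ L := Finset.sum_nonneg fun i _ => by positivity
  have hL1 : (0:ℝ) < 1 + L := by linarith
  have ha01 : 0 < a0 1 := ha0 1 le_rfl (by omega)
  have hγpos : 0 < d / (4 * K * (1 + L)) :=
    div_pos hd (by nlinarith)
  refine ⟨d / (4 * K * (1 + L)), hγpos, 1, one_pos,
    1 + (a0 1 + 2*K + d) * (4 / (3*d)), ?_⟩
  set γb := d / (4 * K * (1 + L)) with hγ_def
  intro x hx hR
  set M := (Finset.Icc 1 n).sup' hne (fun i => |x i|) with hM_def
  have hR' : 1 + (a0 1 + 2*K + d) * (4 / (3*d)) ≤ M := hR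
  have hM1 : 1 ≤ M := by
    have h1 : 0 ≤ (a0 1 + 2*K + d) * (4 / (3*d)) :=
      mul_nonneg (by linarith) (div_nonneg (by norm_num) (by linarith))
    linarith
  have hM0 : 0 ≤ M := by linarith
  have hxMa : ∀ i, 1 ≤ i → i ≤ n → |x i| ≤ M := fun i h1 h2 =>
    Finset.le_sup' (fun i => |x i|) (Finset.mem_Icc.mpr ⟨h1, h2⟩)
  have hxM : ∀ i, 1 ≤ i → i ≤ n → x i ≤ M := fun i h1 h2 =>
    le_trans (le_abs_self _) (hxMa i h1 h2)
  obtain ⟨i0, hi0mem, hi0⟩ := Finset.exists_mem_eq_sup' hne (fun i => |x i|)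
  have hi0' := Finset.mem_Icc.mp hi0mem
  have hxi0 : (x i0)^2 = M^2 := by
    rw [hM_def, hi0, abs_of_nonneg (hx i0 hi0'.1 hi0'.2)]
  set S := ∑ i ∈ Finset.Icc 1 n, ccoef a i * x i * fdrift n a a0 i x with hS_def
  set F := ∑ i ∈ Finset.Icc 1 n, |fdrift n a a0 i x| with hF_def
  set Q := ∑ i ∈ Finset.Icc 1 n, ∑ j ∈ Finset.Icc 1 n,
      σ i j * ccoef a i * ccoef a j * x i * x j with hQ_def
  set D := 1 + ∑ i ∈ Finset.Icc 1 n, ccoef a i * x i with hD_def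
  clear_value d Cs K L γb M S F Q D
  -- bound on S
  have hmid : 0 ≤ ∑ i ∈ Finset.Icc 2 n, ccoef a i * a0 i * x i :=
    Finset.sum_nonneg fun i hi => by
      simp only [Finset.mem_Icc] at hi
      exact mul_nonneg (mul_nonneg (hcpos i (by omega) hi.2).le (ha0 i (by omega) hi.2).le)
        (hx i (by omega) hi.2)
  have hsq : d * M^2 ≤ ∑ i ∈ Finset.Icc 1 n, ccoef a i * a i i * (x i)^2 := by
    have h1 : d ≤ ccoef a i0 * a i0 i0 := hd_def ▸ Finset.inf'_le _ hi0mem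
    have h2 : ccoef a i0 * a i0 i0 * (x i0)^2 ≤
        ∑ i ∈ Finset.Icc 1 n, ccoef a i * a i i * (x i)^2 :=
      Finset.single_le_sum (f := fun i => ccoef a i * a i i * (x i)^2) (fun i hi => by
        simp only [Finset.mem_Icc] at hi
        exact mul_nonneg (mul_nonneg (hcpos i hi.1 hi.2).le (ha_diag i hi.1 hi.2).le)
          (sq_nonneg _)) hi0mem
    have h3 : d * M^2 ≤ ccoef a i0 * a i0 i0 * (x i0)^2 := by
      rw [hxi0]
      exact mul_le_mul_of_nonneg_right h1 (sq_nonneg M)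
    linarith
  have hS : S ≤ a0 1 * M - d * M^2 := by
    rw [hS_def, sum_identity n hn a a0 hrel x]
    have hx1 : a0 1 * x 1 ≤ a0 1 * M :=
      mul_le_mul_of_nonneg_left (hxM 1 le_rfl (by omega)) ha01.le
    linarith
  -- bounds on D
  have hDsum : 0 ≤ ∑ i ∈ Finset.Icc 1 n, ccoef a i * x i :=
    Finset.sum_nonneg fun i hi => by
      simp only [Finset.mem_Icc] at hi
      exact mul_nonneg (hcpos i hi.1 hi.2).le (hx i hi.1 hi.2)
  have hD1 : (1:ℝ) ≤ D := by rw [hD_def]; linarith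
  have hD0 : (0:ℝ) < D := by linarith
  have hDK : D ≤ K * (1 + M) := by
    have h1 : ∑ i ∈ Finset.Icc 1 n, ccoef a i * x i ≤ Cs * M := by
      rw [hCs_def, Finset.sum_mul]
      apply Finset.sum_le_sum
      intro i hi
      simp only [Finset.mem_Icc] at hi
      exact mul_le_mul_of_nonneg_left (hxM i hi.1 hi.2) (hcpos i hi.1 hi.2).le
    rw [hD_def, hK_def]
    nlinarith
  -- sigma nonneg
  have hQ : 0 ≤ Q := by
    have h := hσpsd (fun i => ccoef a i * x i)
    rw [hQ_def]
    calc (0:ℝ) ≤ _ := h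
      _ = _ := Finset.sum_congr rfl fun i _ => Finset.sum_congr rfl fun j _ => by ring
  -- bound on F
  have hF : F ≤ L * (1 + M) := by
    rw [hF_def, hL_def, Finset.sum_mul]
    apply Finset.sum_le_sum
    intro i hi
    simp only [Finset.mem_Icc] at hi
    unfold fdrift
    split
    · next h =>
        subst h
        have h1 := hxMa 1 le_rfl (by omega)
        have h2 := hxMa 2 (by omega) hn
        have he : a0 1 - a 1 1 * x 1 - a 1 2 * x 2
            = a0 1 + 0 * x 1 + (-(a 1 1)) * x 1 + (-(a 1 2)) * x 2 := by ring
        rw [he]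
        refine le_trans (abs4 _ _ _ _ _ _ _ M h1 h1 h2) ?_
        apply mul_le_mul_of_nonneg_right _ (by linarith : (0:ℝ) ≤ 1 + M)
        simp only [abs_neg, abs_zero]
        norm_num
    · split
      · next h1 h2 =>
          subst h2
          have hu := hxMa (i-1) (by omega) (by omega)
          have hv := hxMa i (by omega) le_rfl
          have he : -a0 i + a i (i-1) * x (i-1) - a i i * x i
              = (-a0 i) + (a i (i-1)) * x (i-1) + (-(a i i)) * x i + 0 * x i := by ring
          rw [he]
          refine le_trans (abs4 _ _ _ _ _ _ _ M hu hv hv) ?_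
          apply mul_le_mul_of_nonneg_right _ (by linarith : (0:ℝ) ≤ 1 + M)
          simp only [abs_neg, abs_zero]
          linarith [abs_nonneg (a i (i+1))]
      · next h1 h2 =>
          have hu := hxMa (i-1) (by omega) (by omega)
          have hv := hxMa i (by omega) (by omega)
          have hw := hxMa (i+1) (by omega) (by omega)
          have he : -a0 i + a i (i-1) * x (i-1) - a i i * x i - a i (i+1) * x (i+1)
              = (-a0 i) + (a i (i-1)) * x (i-1) + (-(a i i)) * x i
                + (-(a i (i+1))) * x (i+1) := by ring
          rw [he]
          refine le_trans (abs4 _ _ _ _ _ _ _ M hu hv hw) ?_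
          apply mul_le_mul_of_nonneg_right _ (by linarith : (0:ℝ) ≤ 1 + M)
          simp only [abs_neg, abs_zero]
          linarith
  -- final assembly
  have hK0 : K ≠ 0 := ne_of_gt hK
  have hL0 : (1:ℝ) + L ≠ 0 := ne_of_gt hL1
  have hγK : γb * (1+L) * K = d/4 := by
    rw [hγ_def]; field_simp
  have hγ : 0 < γb := hγpos
  have hTneg : -1 - γb * ((1+L) * (1+M)) ≤ 0 := by
    nlinarith [mul_nonneg hγ.le (mul_nonneg (by linarith : (0:ℝ) ≤ 1+L)
      (by linarith : (0:ℝ) ≤ 1+M))]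
  have hRd : (a0 1 + 2*K + d) * 4 ≤ 3 * d * (M - 1) := by
    have h4 : (a0 1 + 2*K + d) * (4 / (3*d)) ≤ M - 1 := by linarith
    have h5 := mul_le_mul_of_nonneg_right h4 (by positivity : (0:ℝ) ≤ 3*d)
    have hd0 : (3:ℝ)*d ≠ 0 := by positivity
    calc (a0 1 + 2*K + d) * 4 = (a0 1 + 2*K + d) * (4 / (3*d)) * (3*d) := by
          field_simp
      _ ≤ (M-1) * (3*d) := h5
      _ = 3*d*(M-1) := by ring
  have hT : S / D ≤ -1 - γb * ((1+L) * (1+M)) := by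
    rw [div_le_iff₀ hD0]
    have step1 : (-1 - γb*((1+L)*(1+M))) * (K*(1+M)) ≤ (-1 - γb*((1+L)*(1+M))) * D :=
      mul_le_mul_of_nonpos_left hDK hTneg
    have expand : (-1 - γb*((1+L)*(1+M))) * (K*(1+M)) = -(K*(1+M)) - (d/4)*(1+M)^2 := by
      linear_combination (-(1+M)^2) * hγK
    have step2 : a0 1 * M - d*M^2 ≤ -(K*(1+M)) - (d/4)*(1+M)^2 := by
      nlinarith [hRd, hM1, hd, hK,
        mul_le_mul_of_nonneg_right hRd (by linarith : (0:ℝ) ≤ M),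
        mul_le_mul_of_nonneg_left hM1 hd.le,
        mul_le_mul_of_nonneg_left hM1 hK.le]
    linarith
  have h5 : 1 + F ≤ (1+L)*(1+M) := by nlinarith
  have h6 : γb * (1 + F) ≤ γb * ((1+L)*(1+M)) := mul_le_mul_of_nonneg_left h5 hγ.le
  have h7 : 0 ≤ 1 / 2 * Q / D ^ 2 := by positivity
  linarith
end
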